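/- arXiv:math/0512313 — 5 statements merged into one kernel-verified Lean document; each statement's English description precedes it below -/
import Mathlib

section
/- Let 1 ≤ p < r ≤ ∞ and let m : (0,1] → ℂ be continuous. Suppose there exists N ≥ 0 such that for every g ∈ AC_r the product mg (extended by (mg)(0) = 0) belongs to AC_p and ‖(mg)'‖_p ≤ N ‖g'‖_r. Then for every α ∈ (0,1], there exists m' ∈ L^p[α,1] with m(t) = m(α) + ∫_α^t m'(s) ds for all t ∈ [α,1] (so m is absolutely continuous on [α,1]), and ‖m'·χ_{[α,1]}‖_p ≤ N·α^{−1/r'}, where r' is the conjugate exponent of r. -/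
open MeasureTheory Set
open scoped ENNReal NNReal

/-- The Lebesgue measure restricted to `[0,1]`. -/
noncomputable def mu01 : Measure ℝ := volume.restrict (Set.Icc (0 : ℝ) 1)

/-- Theorem 5.  Let `1 ≤ p < r ≤ ∞`, let `r'` (here `q`) be
the conjugate exponent of `r`, and let `m` be continuous on `(0,1]`.  Suppose
there is `N ≥ 0` such that for every `g ∈ AC_r` the product `mg` (extended by
`(mg)(0) = 0`) belongs to `AC_p` with `‖(mg)'‖_p ≤ N ‖g'‖_r`.  Then for every
`α ∈ (0,1]`, `m` is absolutely continuous on `[α,1]` with derivative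
`m' ∈ L^p[α,1]` and `‖m'·χ_{[α,1]}‖_p ≤ N·α^{−1/r'}`. -/
theorem multiplier_ACr_ACp_necessary
    (p r q : ℝ≥0∞) (hp : 1 ≤ p) (hpr : p < r) (hrq : r⁻¹ + q⁻¹ = 1)
    (m : ℝ → ℂ)
    (hmc : ContinuousOn m (Set.Ioc (0 : ℝ) 1))
    (N : ℝ) (hN : 0 ≤ N)
    (hmult : ∀ g g' : ℝ → ℂ, MemLp g' r mu01 →
      (∀ t ∈ Set.Icc (0 : ℝ) 1, g t = ∫ s in Set.Ioc (0 : ℝ) t, g' s) →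
      ∃ D : ℝ → ℂ, MemLp D p mu01 ∧
        (∀ t ∈ Set.Icc (0 : ℝ) 1,
          (if t = 0 then 0 else m t * g t) = ∫ s in Set.Ioc (0 : ℝ) t, D s) ∧
        eLpNorm D p mu01 ≤ ENNReal.ofReal N * eLpNorm g' r mu01) :
    ∀ α ∈ Set.Ioc (0 : ℝ) 1, ∃ m' : ℝ → ℂ,
      MemLp m' p (volume.restrict (Set.Icc α 1)) ∧
      (∀ t ∈ Set.Icc α 1, m t = m α + ∫ s in Set.Ioc α t, m' s) ∧
      eLpNorm ((Set.Icc α 1).indicator m') p mu01 ≤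
        ENNReal.ofReal (N * α ^ (-(q⁻¹).toReal)) := by
  intro α hα
  obtain ⟨hα0, hα1⟩ := hα
  have hr1 : 1 < r := lt_of_le_of_lt hp hpr
  have hr0 : r ≠ 0 := by positivity
  set c : ℂ := (α : ℂ)⁻¹ with hc
  set g' : ℝ → ℂ := (Set.Ioc (0:ℝ) α).indicator (fun _ => c) with hg'
  have hmeas : MeasurableSet (Set.Ioc (0:ℝ) α) := measurableSet_Ioc
  have hmuIoc : mu01 (Set.Ioc (0:ℝ) α) = ENNReal.ofReal α := by
    rw [mu01, Measure.restrict_apply hmeas,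
      Set.inter_eq_left.mpr (Set.Ioc_subset_Icc_self.trans (Set.Icc_subset_Icc le_rfl hα1)),
      Real.volume_Ioc, sub_zero]
  have hg'mem : MemLp g' r mu01 :=
    memLp_indicator_const r hmeas c (Or.inr (by simp [hmuIoc]))
  set g : ℝ → ℂ := fun t => ∫ s in Set.Ioc (0:ℝ) t, g' s with hgdef
  have hg1 : ∀ t : ℝ, α ≤ t → g t = 1 := by
    intro t ht
    have hinter : Set.Ioc (0:ℝ) t ∩ Set.Ioc (0:ℝ) α = Set.Ioc (0:ℝ) α := by
      rw [Set.inter_eq_right]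
      exact Set.Ioc_subset_Ioc le_rfl ht
    rw [hgdef]
    simp only [hg']
    rw [setIntegral_indicator hmeas, hinter, setIntegral_const, Real.volume_real_Ioc_of_le hα0.le, sub_zero]
    rw [hc, Complex.real_smul]
    exact div_self (by exact_mod_cast hα0.ne')
  obtain ⟨D, hDmem, hDeq, hDnorm⟩ := hmult g g' hg'mem (fun t _ => rfl)
  have hD1 : ∀ t : ℝ, t ∈ Set.Icc α 1 → m t = ∫ s in Set.Ioc (0:ℝ) t, D s := by
    intro t ⟨ht1, ht2⟩
    have ht0 : (0:ℝ) < t := lt_of_lt_of_le hα0 ht1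
    have := hDeq t ⟨ht0.le, ht2⟩
    rw [if_neg ht0.ne', hg1 t ht1, mul_one] at this
    exact this
  haveI : IsFiniteMeasure mu01 := by
    constructor
    rw [mu01, Measure.restrict_apply_univ, Real.volume_Icc]
    simp
  have hDint : IntegrableOn D (Set.Icc (0:ℝ) 1) volume := hDmem.integrable hp
  refine ⟨D, ?_, ?_, ?_⟩
  · exact hDmem.mono_measure (Measure.restrict_mono (Set.Icc_subset_Icc hα0.le le_rfl) le_rfl)
  · intro t ht
    obtain ⟨ht1, ht2⟩ := ht
    have hsplit : ∫ s in Set.Ioc (0:ℝ) t, D s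
        = (∫ s in Set.Ioc (0:ℝ) α, D s) + ∫ s in Set.Ioc α t, D s := by
      rw [← setIntegral_union (Set.Ioc_disjoint_Ioc_of_le le_rfl) measurableSet_Ioc
        (hDint.mono_set (Set.Ioc_subset_Icc_self.trans (Set.Icc_subset_Icc le_rfl hα1)))
        (hDint.mono_set ((Set.Ioc_subset_Icc_self).trans
          (Set.Icc_subset_Icc hα0.le ht2)))]
      rw [Set.Ioc_union_Ioc_eq_Ioc hα0.le ht1]
    rw [hD1 t ⟨ht1, ht2⟩, hsplit, hD1 α ⟨le_rfl, hα1⟩]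
  · refine le_trans (eLpNorm_indicator_le D) (le_trans hDnorm ?_)
    have hg'norm : eLpNorm g' r mu01 = ‖c‖₊ * (ENNReal.ofReal α) ^ (1 / r.toReal) := by
      rw [hg', eLpNorm_indicator_const' hmeas (by simp [hmuIoc, hα0]) hr0, hmuIoc, enorm_eq_nnnorm]
    have hq : (q⁻¹).toReal = 1 - 1 / r.toReal := by
      have hrinv : r⁻¹ ≤ 1 := le_trans (ENNReal.inv_le_inv.mpr hr1.le) (by simp)
      have : q⁻¹ = 1 - r⁻¹ := ENNReal.eq_sub_of_add_eq (by simp [hr0]) (by rw [add_comm]; exact hrq)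
      rw [this, ENNReal.toReal_sub_of_le hrinv (by simp), ENNReal.toReal_inv, ENNReal.toReal_one,
        one_div]
    have hcnorm : (‖c‖₊ : ℝ≥0∞) = ENNReal.ofReal α⁻¹ := by
      rw [hc, ← enorm_eq_nnnorm, ← ofReal_norm]
      congr 1
      rw [norm_inv, Complex.norm_real, Real.norm_eq_abs, abs_of_pos hα0]
    have hexp : N * α ^ (-(q⁻¹).toReal) = N * (α⁻¹ * α ^ (1 / r.toReal)) := by
      rw [hq, neg_sub, Real.rpow_sub hα0, Real.rpow_one, div_eq_mul_inv]
      ring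
    rw [hg'norm, hcnorm, ENNReal.ofReal_rpow_of_pos hα0, hexp, ENNReal.ofReal_mul hN,
      ENNReal.ofReal_mul (by positivity)]
end

section
/- Let r > p > 1 and define v by 1/v = 1/p − 1/r. Let m : (0,1] → ℂ be continuous with m ∈ L^v(0,1], and suppose there is a measurable function m' on (0,1] with m(t) = m(1) − ∫_t^1 m'(s) ds for all t ∈ (0,1], m'·χ_{[ε,1]} ∈ L^p for every ε ∈ (0,1], and Σ_{n=1}^∞ (2^{−n/r'} ‖P_n m'‖_p)^p < ∞, where P_n m' = m'·χ_{(2^{−n}, 2^{−n+1}]}. Then for every g ∈ AC_r the product mg (extended by (mg)(0) = 0) belongs to AC_p; that is, m defines a multiplier from AC_r to AC_p. -/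
open MeasureTheory Set
open scoped ENNReal NNReal

lemma primitive_Ioc_continuous (h : ℝ → ℂ) (hh : Integrable h volume) (a : ℝ) :
    Continuous (fun x => ∫ y in Ioc a x, h y) := by
  have key : (fun x => ∫ y in Ioc a x, h y) = (fun c => ∫ y in a..c, h y) ∘ (fun x => max a x) := by
    funext x
    rcases le_or_gt a x with hx | hx
    · simp [Function.comp, max_eq_right hx, intervalIntegral.integral_of_le hx]
    · simp [Function.comp, max_eq_left hx.le, Ioc_eq_empty (not_lt.mpr hx.le)]
  rw [key]
  exact (hh.continuous_primitive a).comp (continuous_const.max continuous_id)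

lemma primitive_Ioc_bound (h : ℝ → ℂ) (hh : Integrable h volume) (a x : ℝ) :
    ‖∫ y in Ioc a x, h y‖ ≤ ∫ y, ‖h y‖ := by
  refine (norm_integral_le_integral_norm _).trans ?_
  exact setIntegral_le_integral hh.norm (Filter.Eventually.of_forall fun y => norm_nonneg _)

lemma int_by_parts {a b : ℝ} (hab : a ≤ b) (f h : ℝ → ℂ)
    (hf : Integrable f volume) (hh : Integrable h volume) :
    ∫ x in Ioc a b, (f x * (∫ y in Ioc a x, h y) + (∫ y in Ioc a x, f y) * h x)
      = (∫ y in Ioc a b, f y) * (∫ y in Ioc a b, h y) := by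
  set F : ℝ → ℂ := fun x => ∫ y in Ioc a x, f y with hF
  set H : ℝ → ℂ := fun x => ∫ y in Ioc a x, h y with hH
  set J : ℝ → ℂ := fun x => ∫ y in Ioc x b, h y with hJ
  set μ : Measure ℝ := volume.restrict (Ioc a b) with hμ
  have hFc : Continuous F := primitive_Ioc_continuous f hf a
  have hHc : Continuous H := primitive_Ioc_continuous h hh a
  have hJc : Continuous J := by
    have key : J = (fun c => ∫ y in c..b, h y) ∘ (fun x => min b x) := by
      funext x
      rcases le_or_gt x b with hx | hx
      · simp [hJ, Function.comp, min_eq_right hx, intervalIntegral.integral_of_le hx]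
      · simp [hJ, Function.comp, min_eq_left hx.le, Ioc_eq_empty (not_lt.mpr hx.le)]
    rw [key]
    have : Continuous fun c : ℝ => ∫ y in c..b, h y := by
      have h1 : Continuous fun c : ℝ => ∫ y in b..c, h y := hh.continuous_primitive b
      have : (fun c : ℝ => ∫ y in c..b, h y) = fun c => -∫ y in b..c, h y := by
        funext c; rw [intervalIntegral.integral_symm]
      rw [this]; exact h1.neg
    exact this.comp (continuous_const.min continuous_id)
  have hfμ : Integrable f μ := hf.restrict
  have hhμ : Integrable h μ := hh.restrict
  have hHb : ∀ x, ‖H x‖ ≤ ∫ y, ‖h y‖ := fun x => primitive_Ioc_bound h hh a x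
  have hFb : ∀ x, ‖F x‖ ≤ ∫ y, ‖f y‖ := fun x => primitive_Ioc_bound f hf a x
  have hJb : ∀ x, ‖J x‖ ≤ ∫ y, ‖h y‖ := by
    intro x
    refine (norm_integral_le_integral_norm _).trans ?_
    exact setIntegral_le_integral hh.norm (Filter.Eventually.of_forall fun y => norm_nonneg _)
  have i1 : Integrable (fun x => f x * H x) μ := by
    have := hfμ.bdd_mul hHc.aestronglyMeasurable (Filter.Eventually.of_forall hHb)
    simpa [mul_comm] using this
  have i2 : Integrable (fun x => F x * h x) μ :=
    hhμ.bdd_mul hFc.aestronglyMeasurable (Filter.Eventually.of_forall hFb)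
  have i3 : Integrable (fun x => f x * J x) μ := by
    have := hfμ.bdd_mul hJc.aestronglyMeasurable (Filter.Eventually.of_forall hJb)
    simpa [mul_comm] using this
  have fubini : ∫ x, f x * J x ∂μ = ∫ y, F y * h y ∂μ := by
    have hφint : Integrable (fun z : ℝ × ℝ => if z.1 < z.2 then f z.1 * h z.2 else 0)
        (μ.prod μ) := by
      have base : Integrable (fun z : ℝ × ℝ => f z.1 * h z.2) (μ.prod μ) :=
        hfμ.mul_prod hhμ
      have : (fun z : ℝ × ℝ => if z.1 < z.2 then f z.1 * h z.2 else 0)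
          = {z : ℝ × ℝ | z.1 < z.2}.indicator (fun z => f z.1 * h z.2) := by
        funext z; by_cases hz : z.1 < z.2 <;> simp [indicator, hz]
      rw [this]
      exact base.indicator (measurableSet_lt measurable_fst measurable_snd)
    have swap : ∫ x, (∫ y, (if x < y then f x * h y else 0) ∂μ) ∂μ
        = ∫ y, (∫ x, (if x < y then f x * h y else 0) ∂μ) ∂μ :=
      integral_integral_swap hφint
    have lhs : ∫ x, f x * J x ∂μ = ∫ x, (∫ y, (if x < y then f x * h y else 0) ∂μ) ∂μ := by
      rw [hμ]
      refine setIntegral_congr_fun measurableSet_Ioc (fun x hx => ?_)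
      have : ∀ y, (if x < y then f x * h y else 0) = f x * (Ioi x).indicator h y := by
        intro y; by_cases hy : x < y <;> simp [indicator, hy]
      simp_rw [this]
      rw [integral_const_mul]
      congr 1
      rw [integral_indicator measurableSet_Ioi, Measure.restrict_restrict measurableSet_Ioi]
      have : Ioi x ∩ Ioc a b = Ioc x b := by
        ext y; simp only [mem_inter_iff, mem_Ioi, mem_Ioc]
        exact ⟨fun ⟨h1, _, h3⟩ => ⟨h1, h3⟩, fun ⟨h1, h2⟩ => ⟨h1, hx.1.trans h1, h2⟩⟩
      rw [this]
    have rhs : ∫ y, F y * h y ∂μ = ∫ y, (∫ x, (if x < y then f x * h y else 0) ∂μ) ∂μ := by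
      rw [hμ]
      refine setIntegral_congr_fun measurableSet_Ioc (fun y hy => ?_)
      have : ∀ x, (if x < y then f x * h y else 0) = ((Iio y).indicator f x) * h y := by
        intro x; by_cases hx : x < y <;> simp [indicator, hx]
      simp_rw [this]
      rw [integral_mul_const]
      congr 1
      rw [integral_indicator measurableSet_Iio, Measure.restrict_restrict measurableSet_Iio]
      have hset : Iio y ∩ Ioc a b = Ioo a y := by
        ext x; simp only [mem_inter_iff, mem_Iio, mem_Ioo, mem_Ioc]
        exact ⟨fun ⟨h1, h2, _⟩ => ⟨h2, h1⟩, fun ⟨h1, h2⟩ => ⟨h2, h1, (le_of_lt h2).trans hy.2⟩⟩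
      rw [hset]
      exact (setIntegral_congr_set Ioo_ae_eq_Ioc).symm
    rw [lhs, swap, ← rhs]
  have split : F b * H b = (∫ x, f x * H x ∂μ) + ∫ x, f x * J x ∂μ := by
    have e1 : F b * H b = ∫ x, f x * H b ∂μ := by
      rw [integral_mul_const]
    have e2 : ∫ x, f x * H b ∂μ = ∫ x, (f x * H x + f x * J x) ∂μ := by
      rw [hμ]
      refine setIntegral_congr_fun measurableSet_Ioc (fun x hx => ?_)
      have hsplit : H b = H x + J x := by
        show (∫ y in Ioc a b, h y) = (∫ y in Ioc a x, h y) + ∫ y in Ioc x b, h y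
        rw [← Ioc_union_Ioc_eq_Ioc hx.1.le hx.2,
          setIntegral_union (Set.Ioc_disjoint_Ioc_of_le le_rfl) measurableSet_Ioc
            hh.integrableOn hh.integrableOn]
      rw [hsplit, mul_add]
    rw [e1, e2, integral_add i1 i3]
  calc ∫ x in Ioc a b, (f x * H x + F x * h x)
      = (∫ x, f x * H x ∂μ) + ∫ x, F x * h x ∂μ := integral_add i1 i2
    _ = (∫ x, f x * H x ∂μ) + ∫ x, f x * J x ∂μ := by rw [fubini]
    _ = F b * H b := split.symm
    _ = (∫ y in Ioc a b, f y) * (∫ y in Ioc a b, h y) := rfl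

lemma enorm_indicator_rpow (f : ℝ → ℂ) (s : Set ℝ) {e : ℝ} (he : 0 < e) (x : ℝ) :
    (‖s.indicator f x‖₊ : ℝ≥0∞) ^ e = s.indicator (fun y => (‖f y‖₊ : ℝ≥0∞) ^ e) x := by
  by_cases hx : x ∈ s <;> simp [hx, ENNReal.zero_rpow_of_pos he]

/-- Theorem 6, sufficiency for `r > p > 1`.  Let `r > p > 1`,
let `v` satisfy `1/v = 1/p − 1/r` and let `q = r'` be the conjugate exponent of
`r`.  Let `m ∈ L^v(0,1]` be continuous on `(0,1]`, absolutely continuous on each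
`[ε,1]` with derivative `m'` satisfying `m'·χ_{[ε,1]} ∈ L^p` and
`Σ_{n≥1} (2^{−n/r'} ‖P_n m'‖_p)^p < ∞`, where `P_n m' = m'·χ_{(2^{−n},2^{−n+1}]}`.
Then for every `g ∈ AC_r` the product `mg` (extended by `(mg)(0) = 0`) belongs
to `AC_p`: `m` defines a multiplier from `AC_r` to `AC_p`. -/
theorem multiplier_ACr_ACp_sufficient
    (p r v q : ℝ≥0∞) (hp : 1 < p) (hpr : p < r)
    (hv : v⁻¹ = p⁻¹ - r⁻¹) (hq : r⁻¹ + q⁻¹ = 1)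
    (m m' : ℝ → ℂ)
    (hmc : ContinuousOn m (Set.Ioc (0 : ℝ) 1))
    (hmv : MemLp m v mu01)
    (hm'meas : Measurable m')
    (hmac : ∀ t ∈ Set.Ioc (0 : ℝ) 1, m t = m 1 - ∫ s in Set.Ioc t 1, m' s)
    (hm'p : ∀ ε ∈ Set.Ioc (0 : ℝ) 1, MemLp ((Set.Icc ε 1).indicator m') p mu01)
    (hsum : ∑' n : ℕ,
        (ENNReal.ofReal ((2 : ℝ) ^ (-((n : ℝ) + 1) * (q⁻¹).toReal)) *
          eLpNorm ((Set.Ioc ((2 : ℝ) ^ (-((n : ℝ) + 1))) ((2 : ℝ) ^ (-(n : ℝ)))).indicator m')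
            p mu01) ^ p.toReal < ⊤) :
    ∀ g g' : ℝ → ℂ, MemLp g' r mu01 →
      (∀ t ∈ Set.Icc (0 : ℝ) 1, g t = ∫ s in Set.Ioc (0 : ℝ) t, g' s) →
      ∃ D : ℝ → ℂ, MemLp D p mu01 ∧
        ∀ t ∈ Set.Icc (0 : ℝ) 1,
          (if t = 0 then 0 else m t * g t) = ∫ s in Set.Ioc (0 : ℝ) t, D s := by
  intro g g' hg' hgint
  -- ## Exponent arithmetic
  have hp0 : p ≠ 0 := (zero_lt_one.trans hp).ne'
  have hpT : p ≠ ⊤ := (lt_of_lt_of_le hpr le_top).ne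
  set pt := p.toReal with hptdef
  have hpt1 : 1 < pt := by
    rw [hptdef, ← ENNReal.toReal_one]; exact ENNReal.toReal_strict_mono hpT hp
  have hpt0 : 0 < pt := lt_trans one_pos hpt1
  have hr1 : 1 < r := hp.trans hpr
  have hrinv1 : r⁻¹ < 1 := ENNReal.inv_lt_one.mpr hr1
  have hqinv : q⁻¹ = 1 - r⁻¹ :=
    ENNReal.eq_sub_of_add_eq (hrinv1.trans_le le_top).ne (by rw [add_comm]; exact hq)
  set θ := (q⁻¹).toReal with hθdef
  have hθeq : θ = 1 - (r⁻¹).toReal := by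
    rw [hθdef, hqinv, ENNReal.toReal_sub_of_le hrinv1.le ENNReal.one_ne_top, ENNReal.toReal_one]
  have hrinvR : (r⁻¹).toReal < 1 := by
    rw [← ENNReal.toReal_one]; exact ENNReal.toReal_strict_mono ENNReal.one_ne_top hrinv1
  have hθpos : 0 < θ := by rw [hθeq]; linarith
  have hpinv1 : p⁻¹ < 1 := ENNReal.inv_lt_one.mpr hp
  have hinvrp : r⁻¹ < p⁻¹ := ENNReal.inv_lt_inv.mpr hpr
  have hv0 : v⁻¹ ≠ 0 := by rw [hv]; exact (tsub_pos_of_lt hinvrp).ne'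
  have hvT : v ≠ ⊤ := ENNReal.inv_ne_zero.mp hv0
  have hvinvT : v⁻¹ ≠ ⊤ := by
    rw [hv]; exact (lt_of_le_of_lt tsub_le_self (hpinv1.trans_le le_top)).ne
  have hv0' : v ≠ 0 := ENNReal.inv_ne_top.mp hvinvT
  set vt := v.toReal with hvtdef
  have hvt0 : 0 < vt := ENNReal.toReal_pos hv0' hvT
  have hpvr : p⁻¹ = v⁻¹ + r⁻¹ := by rw [hv, tsub_add_cancel_of_le hinvrp.le]
  have hθv : 1 < θ * vt := by
    have h1 : (v⁻¹).toReal = (p⁻¹).toReal - (r⁻¹).toReal := by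
      rw [hv, ENNReal.toReal_sub_of_le hinvrp.le (hpinv1.trans_le le_top).ne]
    have h2 : (p⁻¹).toReal < 1 := by
      rw [← ENNReal.toReal_one]; exact ENNReal.toReal_strict_mono ENNReal.one_ne_top hpinv1
    have h3 : vt⁻¹ < θ := by
      rw [hvtdef, ← ENNReal.toReal_inv, h1, hθeq]; linarith
    calc (1:ℝ) = vt⁻¹ * vt := (inv_mul_cancel₀ hvt0.ne').symm
      _ < θ * vt := mul_lt_mul_of_pos_right h3 hvt0
  haveI hfin : IsFiniteMeasure mu01 := by
    constructor
    rw [mu01, Measure.restrict_apply_univ, Real.volume_Icc]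
    exact ENNReal.ofReal_lt_top
  -- ## the primitive G
  set h : ℝ → ℂ := (Icc (0:ℝ) 1).indicator g' with hhdef
  have hg'mu : Integrable g' mu01 :=
    memLp_one_iff_integrable.mp (hg'.mono_exponent hr1.le)
  have hh_int : Integrable h volume := by
    rw [hhdef]; exact (integrable_indicator_iff measurableSet_Icc).mpr hg'mu
  set G : ℝ → ℂ := fun t => ∫ y in Ioc (0:ℝ) t, h y with hGdef
  have hGc : Continuous G := primitive_Ioc_continuous h hh_int 0
  have hGg : ∀ t ∈ Icc (0:ℝ) 1, G t = g t := by
    intro t ht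
    rw [hgint t ht, hGdef]
    exact setIntegral_congr_fun measurableSet_Ioc
      (fun y hy => Set.indicator_of_mem (Set.mem_Icc.mpr ⟨hy.1.le, hy.2.trans ht.2⟩) g')
  set C := (eLpNorm g' r mu01).toReal with hCdef
  have hC0 : 0 ≤ C := ENNReal.toReal_nonneg
  have hGb : ∀ s ∈ Ioc (0:ℝ) 1, ‖G s‖ ≤ C * s ^ θ := by
    intro s hs
    have hsub : Ioc (0:ℝ) s ⊆ Icc (0:ℝ) 1 := fun y hy => ⟨hy.1.le, hy.2.trans hs.2⟩
    have hGs : G s = ∫ y, g' y ∂(mu01.restrict (Ioc 0 s)) := by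
      rw [mu01, Measure.restrict_restrict measurableSet_Ioc, inter_eq_self_of_subset_left hsub,
        hGdef]
      exact setIntegral_congr_fun measurableSet_Ioc (fun y hy => Set.indicator_of_mem (hsub hy) g')
    rw [hGs]
    have h1 : ‖∫ y, g' y ∂(mu01.restrict (Ioc 0 s))‖
        ≤ (∫⁻ y, ENNReal.ofReal ‖g' y‖ ∂(mu01.restrict (Ioc 0 s))).toReal :=
      norm_integral_le_lintegral_norm _
    have h2 : ∫⁻ y, ENNReal.ofReal ‖g' y‖ ∂(mu01.restrict (Ioc 0 s))
        = eLpNorm g' 1 (mu01.restrict (Ioc 0 s)) := by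
      rw [eLpNorm_one_eq_lintegral_enorm]; simp_rw [ofReal_norm]
    have h3 := eLpNorm_le_eLpNorm_mul_rpow_measure_univ (μ := mu01.restrict (Ioc 0 s))
      hr1.le (hg'.1.restrict)
    have hμuniv : (mu01.restrict (Ioc 0 s)) univ = ENNReal.ofReal s := by
      rw [mu01, Measure.restrict_restrict measurableSet_Ioc, inter_eq_self_of_subset_left hsub,
        Measure.restrict_apply_univ, Real.volume_Ioc, sub_zero]
    have hexp : 1/(1:ℝ≥0∞).toReal - 1/r.toReal = θ := by
      rw [hθeq, ENNReal.toReal_inv, ENNReal.toReal_one]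
      norm_num
    rw [hμuniv, hexp] at h3
    have h4 : eLpNorm g' r (mu01.restrict (Ioc 0 s)) ≤ eLpNorm g' r mu01 :=
      eLpNorm_mono_measure _ Measure.restrict_le_self
    have h5 : eLpNorm g' 1 (mu01.restrict (Ioc 0 s))
        ≤ eLpNorm g' r mu01 * ENNReal.ofReal s ^ θ :=
      le_trans h3 (mul_le_mul_left h4 _)
    have hne : eLpNorm g' r mu01 * ENNReal.ofReal s ^ θ ≠ ⊤ :=
      ENNReal.mul_ne_top hg'.2.ne
        (ENNReal.rpow_lt_top_of_nonneg hθpos.le ENNReal.ofReal_ne_top).ne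
    calc ‖∫ y, g' y ∂(mu01.restrict (Ioc 0 s))‖
        ≤ (eLpNorm g' 1 (mu01.restrict (Ioc 0 s))).toReal := by rw [← h2]; exact h1
      _ ≤ (eLpNorm g' r mu01 * ENNReal.ofReal s ^ θ).toReal := ENNReal.toReal_mono hne h5
      _ = C * s ^ θ := by
          rw [ENNReal.toReal_mul, ← ENNReal.toReal_rpow, ENNReal.toReal_ofReal hs.1.le, hCdef]
  -- ## The dyadic decomposition and Memℒp of the candidate derivative
  set E : ℕ → Set ℝ := fun n => Set.Ioc ((2:ℝ) ^ (-((n:ℝ)+1))) ((2:ℝ) ^ (-(n:ℝ))) with hEdef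
  have hEmeas : ∀ n, MeasurableSet (E n) := fun n => measurableSet_Ioc
  have hE1 : ∀ n, E n ⊆ Ioc (0:ℝ) 1 := by
    intro n x hx
    exact ⟨lt_trans (Real.rpow_pos_of_pos two_pos _) hx.1,
      hx.2.trans (Real.rpow_le_one_of_one_le_of_nonpos one_le_two
        (neg_nonpos.mpr (Nat.cast_nonneg n)))⟩
  have hEdisj : Pairwise (Function.onFun Disjoint E) := by
    have key : ∀ {i j : ℕ}, i < j → Disjoint (E i) (E j) := by
      intro i j hij
      rw [hEdef]
      simp only
      rw [Set.Ioc_disjoint_Ioc]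
      refine le_trans (min_le_right _ _) (le_trans ?_ (le_max_left _ _))
      rw [Real.rpow_le_rpow_left_iff one_lt_two]
      have : (i:ℝ) + 1 ≤ j := by exact_mod_cast hij
      linarith
    intro i j hij
    rcases lt_or_gt_of_ne hij with hlt | hlt
    · exact key hlt
    · exact (key hlt).symm
  have hEunion : Ioc (0:ℝ) 1 = ⋃ n, E n := by
    ext x
    simp only [mem_iUnion]
    constructor
    · rintro ⟨hx0, hx1⟩
      have hconv : ∀ k : ℕ, (2:ℝ) ^ (-((k:ℝ)+1)) = (1/2:ℝ) ^ (k+1) := by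
        intro k
        rw [one_div, inv_pow, ← Real.rpow_natCast 2 (k+1), ← Real.rpow_neg two_pos.le]
        push_cast; ring_nf
      have hex : ∃ n : ℕ, (2:ℝ) ^ (-((n:ℝ)+1)) < x := by
        obtain ⟨k, hk⟩ := exists_pow_lt_of_lt_one hx0 (by norm_num : (1/2:ℝ) < 1)
        refine ⟨k, ?_⟩
        rw [hconv k]
        calc (1/2:ℝ) ^ (k+1) ≤ (1/2:ℝ) ^ k :=
              pow_le_pow_of_le_one (by norm_num) (by norm_num) (Nat.le_succ k)
          _ < x := hk
      refine ⟨Nat.find hex, Nat.find_spec hex, ?_⟩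
      rcases Nat.eq_zero_or_pos (Nat.find hex) with hn | hn
      · rw [hn]
        simpa using hx1
      · obtain ⟨k, hk⟩ := Nat.exists_eq_succ_of_ne_zero hn.ne'
        have hnot : ¬ ((2:ℝ) ^ (-((k:ℝ)+1)) < x) := Nat.find_min hex (by omega)
        rw [hk]
        push_cast
        exact not_lt.mp hnot
    · rintro ⟨n, hn⟩; exact hE1 n hn
  have hPn : ∀ n, (eLpNorm ((E n).indicator m') p mu01) ^ pt
      = ∫⁻ s in E n, (‖m' s‖₊ : ℝ≥0∞) ^ pt ∂volume := by
    intro n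
    rw [eLpNorm_eq_lintegral_rpow_enorm_toReal hp0 hpT, ← ENNReal.rpow_mul, one_div,
      inv_mul_cancel₀ hpt0.ne', ENNReal.rpow_one]
    simp_rw [enorm_eq_nnnorm, ← hptdef]
    simp_rw [enorm_indicator_rpow m' (E n) hpt0]
    rw [lintegral_indicator (hEmeas n), mu01, Measure.restrict_restrict (hEmeas n),
      inter_eq_self_of_subset_left ((hE1 n).trans Ioc_subset_Icc_self)]
  set K : ℝ≥0∞ := ENNReal.ofReal (C * 2 ^ θ) with hKdef
  have hAfin : ∫⁻ s in Ioc (0:ℝ) 1, (‖m' s * G s‖₊ : ℝ≥0∞) ^ pt ∂volume < ⊤ := by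
    rw [hEunion, lintegral_iUnion hEmeas hEdisj]
    have hterm : ∀ n, ∫⁻ s in E n, (‖m' s * G s‖₊ : ℝ≥0∞) ^ pt ∂volume
        ≤ K ^ pt * (ENNReal.ofReal ((2:ℝ) ^ (-((n:ℝ)+1) * θ)) *
            eLpNorm ((E n).indicator m') p mu01) ^ pt := by
      intro n
      set o : ℝ≥0∞ := ENNReal.ofReal ((2:ℝ) ^ (-((n:ℝ)+1) * θ)) with hodef
      have hKo : K * o ≠ ⊤ := ENNReal.mul_ne_top ENNReal.ofReal_ne_top ENNReal.ofReal_ne_top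
      have hpoint : ∀ s ∈ E n, (‖m' s * G s‖₊ : ℝ≥0∞) ^ pt ≤ (K * o) ^ pt * (‖m' s‖₊ : ℝ≥0∞) ^ pt := by
        intro s hs
        have hsIoc : s ∈ Ioc (0:ℝ) 1 := hE1 n hs
        have hGs : ‖G s‖ ≤ C * 2 ^ θ * (2:ℝ) ^ (-((n:ℝ)+1) * θ) := by
          have h1 : ‖G s‖ ≤ C * s ^ θ := hGb s hsIoc
          have h2 : s ^ θ ≤ ((2:ℝ) ^ (-(n:ℝ))) ^ θ :=
            Real.rpow_le_rpow hsIoc.1.le hs.2 hθpos.le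
          have h3 : ((2:ℝ) ^ (-(n:ℝ))) ^ θ = 2 ^ θ * (2:ℝ) ^ (-((n:ℝ)+1) * θ) := by
            rw [← Real.rpow_mul two_pos.le, ← Real.rpow_add two_pos]
            ring_nf
          calc ‖G s‖ ≤ C * s ^ θ := h1
            _ ≤ C * ((2:ℝ) ^ (-(n:ℝ))) ^ θ := mul_le_mul_of_nonneg_left h2 hC0
            _ = C * 2 ^ θ * (2:ℝ) ^ (-((n:ℝ)+1) * θ) := by rw [h3]; ring
        have hGe : (‖G s‖₊ : ℝ≥0∞) ≤ K * o := by
          rw [← enorm_eq_nnnorm, ← ofReal_norm, hKdef, hodef, ← ENNReal.ofReal_mul (by positivity)]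
          exact ENNReal.ofReal_le_ofReal hGs
        calc (‖m' s * G s‖₊ : ℝ≥0∞) ^ pt = ((‖m' s‖₊ : ℝ≥0∞) * (‖G s‖₊ : ℝ≥0∞)) ^ pt := by
              rw [nnnorm_mul, ENNReal.coe_mul]
          _ ≤ ((‖m' s‖₊ : ℝ≥0∞) * (K * o)) ^ pt :=
              ENNReal.rpow_le_rpow (mul_le_mul_right hGe _) hpt0.le
          _ = (K * o) ^ pt * (‖m' s‖₊ : ℝ≥0∞) ^ pt := by
              rw [ENNReal.mul_rpow_of_nonneg _ _ hpt0.le, mul_comm]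
      calc ∫⁻ s in E n, (‖m' s * G s‖₊ : ℝ≥0∞) ^ pt ∂volume
          ≤ ∫⁻ s in E n, (K * o) ^ pt * (‖m' s‖₊ : ℝ≥0∞) ^ pt ∂volume :=
            setLIntegral_mono' (hEmeas n) hpoint
        _ = (K * o) ^ pt * ∫⁻ s in E n, (‖m' s‖₊ : ℝ≥0∞) ^ pt ∂volume :=
            lintegral_const_mul' _ _ (ENNReal.rpow_lt_top_of_nonneg hpt0.le hKo).ne
        _ = (K * o) ^ pt * (eLpNorm ((E n).indicator m') p mu01) ^ pt := by rw [hPn n]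
        _ = K ^ pt * (o * eLpNorm ((E n).indicator m') p mu01) ^ pt := by
            rw [ENNReal.mul_rpow_of_nonneg _ _ hpt0.le, ENNReal.mul_rpow_of_nonneg _ _ hpt0.le,
              mul_assoc]
    calc ∑' n : ℕ, ∫⁻ s in E n, (‖m' s * G s‖₊ : ℝ≥0∞) ^ pt ∂volume
        ≤ ∑' n : ℕ, K ^ pt * (ENNReal.ofReal ((2:ℝ) ^ (-((n:ℝ)+1) * θ)) *
            eLpNorm ((E n).indicator m') p mu01) ^ pt := ENNReal.tsum_le_tsum hterm
      _ = K ^ pt * ∑' n : ℕ, (ENNReal.ofReal ((2:ℝ) ^ (-((n:ℝ)+1) * θ)) *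
            eLpNorm ((E n).indicator m') p mu01) ^ pt := ENNReal.tsum_mul_left
      _ < ⊤ := ENNReal.mul_lt_top
          (ENNReal.rpow_lt_top_of_nonneg hpt0.le ENNReal.ofReal_ne_top) hsum
  have hA : MemLp ((Ioc (0:ℝ) 1).indicator (fun s => m' s * G s)) p mu01 := by
    constructor
    · exact ((hm'meas.mul hGc.measurable).indicator measurableSet_Ioc).aestronglyMeasurable
    · rw [eLpNorm_eq_lintegral_rpow_enorm_toReal hp0 hpT]
      refine ENNReal.rpow_lt_top_of_nonneg (by positivity) ?_
      have hle : ∫⁻ x, (‖(Ioc (0:ℝ) 1).indicator (fun s => m' s * G s) x‖₊ : ℝ≥0∞) ^ pt ∂mu01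
          ≤ ∫⁻ x in Ioc (0:ℝ) 1, (‖m' x * G x‖₊ : ℝ≥0∞) ^ pt ∂volume := by
        simp_rw [enorm_indicator_rpow _ _ hpt0]
        rw [lintegral_indicator measurableSet_Ioc, mu01,
          Measure.restrict_restrict measurableSet_Ioc]
        exact lintegral_mono' (Measure.restrict_mono inter_subset_left le_rfl) le_rfl
      exact (lt_of_le_of_lt hle hAfin).ne
  have hB : MemLp ((Ioc (0:ℝ) 1).indicator (fun s => m s * g' s)) p mu01 := by
    have h0 : MemLp (m • g') p mu01 := by
      haveI : ENNReal.HolderTriple v r p := ⟨hpvr.symm⟩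
      exact hg'.smul hmv
    have h1 : MemLp (fun s => m s * g' s) p mu01 := h0
    exact h1.indicator measurableSet_Ioc
  set DD : ℝ → ℂ := fun s => m' s * G s + m s * g' s with hDDdef
  set D : ℝ → ℂ := (Ioc (0:ℝ) 1).indicator DD with hDdef
  have hDp : MemLp D p mu01 := by
    have hDsplit : D = (Ioc (0:ℝ) 1).indicator (fun s => m' s * G s)
        + (Ioc (0:ℝ) 1).indicator (fun s => m s * g' s) := by
      funext s
      by_cases hs : s ∈ Ioc (0:ℝ) 1 <;>
        simp [hDdef, hDDdef, indicator_of_mem, indicator_of_notMem, hs]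
    rw [hDsplit]
    exact hA.add hB
  refine ⟨D, hDp, ?_⟩
  -- ## The FTC identity
  have hDvol : Integrable D volume := by
    have hDmu : Integrable D mu01 :=
      memLp_one_iff_integrable.mp (hDp.mono_exponent hp.le)
    have hDind : (Icc (0:ℝ) 1).indicator D = D := by
      rw [hDdef, indicator_indicator, inter_eq_self_of_subset_right Ioc_subset_Icc_self]
    rw [← hDind]
    exact (integrable_indicator_iff measurableSet_Icc).mpr hDmu
  -- the key product-rule identity
  have hkey : ∀ t ∈ Ioc (0:ℝ) 1, ∀ a ∈ Ioo (0:ℝ) t,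
      m t * G t - m a * G a = ∫ x in Ioc a t, DD x := by
    intro t ht a ha
    have hat : a ≤ t := ha.2.le
    have ha1 : a ∈ Ioc (0:ℝ) 1 := ⟨ha.1, hat.trans ht.2⟩
    set fa : ℝ → ℂ := (Icc a 1).indicator m' with hfadef
    have hfaint : Integrable fa volume := by
      have h1 : MemLp fa p mu01 := hm'p a ha1
      have h2 : Integrable fa mu01 := memLp_one_iff_integrable.mp (h1.mono_exponent hp.le)
      have h3 : (Icc (0:ℝ) 1).indicator fa = fa := by
        rw [hfadef, indicator_indicator,
          inter_eq_self_of_subset_right (Icc_subset_Icc ha.1.le le_rfl)]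
      rw [← h3]
      exact (integrable_indicator_iff measurableSet_Icc).mpr h2
    have hm'int : ∀ s : Set ℝ, s ⊆ Icc a 1 → MeasurableSet s → IntegrableOn m' s volume := by
      intro s hs hms
      exact (hfaint.integrableOn : IntegrableOn fa s volume).congr_fun
        (fun x hx => Set.indicator_of_mem (hs hx) m') hms
    have hmdiff : ∀ x ∈ Ioc a (1:ℝ), m x - m a = ∫ y in Ioc a x, m' y := by
      intro x hx
      have hx1 : x ∈ Ioc (0:ℝ) 1 := ⟨ha.1.trans hx.1, hx.2⟩
      rw [hmac x hx1, hmac a ha1]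
      have hsplit : ∫ y in Ioc a 1, m' y
          = (∫ y in Ioc a x, m' y) + ∫ y in Ioc x 1, m' y := by
        rw [← Ioc_union_Ioc_eq_Ioc hx.1.le hx.2,
          setIntegral_union (Set.Ioc_disjoint_Ioc_of_le le_rfl) measurableSet_Ioc
            (hm'int _ (fun y hy => ⟨hy.1.le, hy.2.trans hx.2⟩) measurableSet_Ioc)
            (hm'int _ (fun y hy => ⟨hx.1.le.trans hy.1.le, hy.2⟩) measurableSet_Ioc)]
      rw [hsplit]; ring
    have hGdiff : ∀ x : ℝ, a ≤ x → G x - G a = ∫ y in Ioc a x, h y := by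
      intro x hx
      rw [hGdef]
      simp only
      rw [← Ioc_union_Ioc_eq_Ioc ha.1.le hx,
        setIntegral_union (Set.Ioc_disjoint_Ioc_of_le le_rfl) measurableSet_Ioc
          hh_int.integrableOn hh_int.integrableOn]
      ring
    have hparts := int_by_parts hat fa h hfaint hh_int
    have hEqfa : EqOn fa m' (Ioc a t) := fun x hx => Set.indicator_of_mem (Set.mem_Icc.mpr ⟨hx.1.le, hx.2.trans ht.2⟩) m'
    have hEqh : EqOn h g' (Ioc a t) :=
      fun x hx => Set.indicator_of_mem (Set.mem_Icc.mpr ⟨(ha.1.trans hx.1).le, hx.2.trans ht.2⟩) g'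
    have hcong : ∫ x in Ioc a t, (fa x * (∫ y in Ioc a x, h y) + (∫ y in Ioc a x, fa y) * h x)
        = ∫ x in Ioc a t, (m' x * (G x - G a) + (m x - m a) * g' x) := by
      refine setIntegral_congr_fun measurableSet_Ioc (fun x hx => ?_)
      have e1 : fa x = m' x := hEqfa hx
      have e2 : h x = g' x := hEqh hx
      have e3 : (∫ y in Ioc a x, h y) = G x - G a := (hGdiff x hx.1.le).symm
      have e4 : (∫ y in Ioc a x, fa y) = m x - m a := by
        rw [setIntegral_congr_fun measurableSet_Ioc
          (fun y (hy : y ∈ Ioc a x) => Set.indicator_of_mem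
            (Set.mem_Icc.mpr ⟨hy.1.le, hy.2.trans (hx.2.trans ht.2)⟩) m')]
        exact (hmdiff x ⟨hx.1, hx.2.trans ht.2⟩).symm
      rw [e1, e2, e3, e4]
    have hrhs1 : (∫ y in Ioc a t, fa y) = m t - m a := by
      rw [setIntegral_congr_fun measurableSet_Ioc
        (fun y (hy : y ∈ Ioc a t) => Set.indicator_of_mem (Set.mem_Icc.mpr ⟨hy.1.le, hy.2.trans ht.2⟩) m')]
      exact (hmdiff t ⟨ha.2, ht.2⟩).symm
    have hrhs2 : (∫ y in Ioc a t, h y) = G t - G a := (hGdiff t hat).symm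
    have hmain : ∫ x in Ioc a t, (m' x * (G x - G a) + (m x - m a) * g' x)
        = (m t - m a) * (G t - G a) := by
      rw [← hcong, hparts, hrhs1, hrhs2]
    -- integrability on (a,t]
    have hμ'm' : IntegrableOn m' (Ioc a t) volume :=
      hm'int _ (fun y hy => ⟨hy.1.le, hy.2.trans ht.2⟩) measurableSet_Ioc
    have hμ'g' : IntegrableOn g' (Ioc a t) volume :=
      (hh_int.integrableOn : IntegrableOn h (Ioc a t) volume).congr_fun hEqh measurableSet_Ioc
    have hGbd : ∃ Cg, ∀ x, ‖G x‖ ≤ Cg :=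
      ⟨∫ y, ‖h y‖, fun x => primitive_Ioc_bound h hh_int 0 x⟩
    have i_m'G : Integrable (fun x => m' x * G x) (volume.restrict (Ioc a t)) := by
      have h1 : Integrable (fun x => G x * m' x) (volume.restrict (Ioc a t)) :=
        hμ'm'.bdd_mul (hGc.aestronglyMeasurable.restrict) (Filter.Eventually.of_forall hGbd.choose_spec)
      simpa [mul_comm] using h1
    have hmae : AEStronglyMeasurable m (volume.restrict (Ioc a t)) :=
      (hmc.mono (fun y hy => ⟨ha.1.trans hy.1, hy.2.trans ht.2⟩)).aestronglyMeasurable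
        measurableSet_Ioc
    obtain ⟨Cm, hCm⟩ := IsCompact.exists_bound_of_continuousOn isCompact_Icc
      (hmc.mono (fun y (hy : y ∈ Icc a t) => ⟨ha.1.trans_le hy.1, hy.2.trans ht.2⟩))
    have i_mg' : Integrable (fun x => m x * g' x) (volume.restrict (Ioc a t)) := by
      refine hμ'g'.bdd_mul (c := Cm) hmae ?_
      rw [ae_restrict_iff' measurableSet_Ioc]
      exact Filter.Eventually.of_forall (fun x hx => hCm x ⟨hx.1.le, hx.2⟩)
    have i_m'c : Integrable (fun x => m' x * G a) (volume.restrict (Ioc a t)) :=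
      hμ'm'.mul_const _
    have i_cg' : Integrable (fun x => m a * g' x) (volume.restrict (Ioc a t)) :=
      hμ'g'.const_mul _
    have i_P1 : Integrable (fun x => m' x * (G x - G a) + (m x - m a) * g' x)
        (volume.restrict (Ioc a t)) := by
      apply Integrable.add
      · have he : (fun x => m' x * (G x - G a)) = fun x => m' x * G x - m' x * G a := by
          funext x; ring
        rw [he]; exact i_m'G.sub i_m'c
      · have he : (fun x => (m x - m a) * g' x) = fun x => m x * g' x - m a * g' x := by
          funext x; ring
        rw [he]; exact i_mg'.sub i_cg'
    have hg'set : ∫ x in Ioc a t, g' x = G t - G a := by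
      rw [← setIntegral_congr_fun measurableSet_Ioc hEqh]
      exact hrhs2
    have hm'set : ∫ x in Ioc a t, m' x = m t - m a := (hmdiff t ⟨ha.2, ht.2⟩).symm
    have hfinal : ∫ x in Ioc a t, DD x
        = (m t - m a) * (G t - G a) + ((m t - m a) * G a + m a * (G t - G a)) := by
      calc ∫ x in Ioc a t, DD x
          = ∫ x in Ioc a t, ((m' x * (G x - G a) + (m x - m a) * g' x)
              + (m' x * G a + m a * g' x)) := by
            refine setIntegral_congr_fun measurableSet_Ioc (fun x _ => ?_)
            rw [hDDdef]; ring
        _ = (∫ x in Ioc a t, (m' x * (G x - G a) + (m x - m a) * g' x))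
              + ∫ x in Ioc a t, (m' x * G a + m a * g' x) :=
            integral_add i_P1 (i_m'c.add i_cg')
        _ = (m t - m a) * (G t - G a) + ((m t - m a) * G a + m a * (G t - G a)) := by
            rw [hmain, integral_add i_m'c i_cg', integral_mul_const, integral_const_mul,
              hm'set, hg'set]
    rw [hfinal]; ring
  -- ## conclusion
  intro t ht
  by_cases ht0 : t = 0
  · subst ht0
    simp
  · have ht' : t ∈ Ioc (0:ℝ) 1 := ⟨ht.1.lt_of_ne' ht0, ht.2⟩
    rw [if_neg ht0]
    set I := ∫ s in Ioc (0:ℝ) t, D s with hIdef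
    set Φ : ℝ → ℂ := fun x => ∫ y in Ioc (0:ℝ) x, D y with hΦdef
    have hΦc : Continuous Φ := primitive_Ioc_continuous D hDvol 0
    have hΦ0 : Φ 0 = 0 := by rw [hΦdef]; simp
    have heq : ∀ a ∈ Ioo (0:ℝ) t, m a * G a = m t * G t - I + Φ a := by
      intro a ha
      have h1 := hkey t ht' a ha
      have hDDtoD : ∫ x in Ioc a t, DD x = ∫ x in Ioc a t, D x :=
        (setIntegral_congr_fun measurableSet_Ioc (fun x hx =>
          (Set.indicator_of_mem (Set.mem_Ioc.mpr ⟨ha.1.trans hx.1, hx.2.trans ht'.2⟩) DD).symm))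
      have hsplitI : I = Φ a + ∫ x in Ioc a t, D x := by
        rw [hIdef, hΦdef]
        simp only
        rw [← Ioc_union_Ioc_eq_Ioc ha.1.le ha.2.le,
          setIntegral_union (Set.Ioc_disjoint_Ioc_of_le le_rfl) measurableSet_Ioc
            hDvol.integrableOn hDvol.integrableOn]
      have h2 : m t * G t - m a * G a = I - Φ a := by
        rw [h1, hDDtoD, hsplitI]; ring
      linear_combination -h2
    have htend : Filter.Tendsto (fun a => m a * G a) (nhdsWithin 0 (Ioi (0:ℝ)))
        (nhds (m t * G t - I)) := by
      have hcont : Filter.Tendsto (fun a => m t * G t - I + Φ a)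
          (nhdsWithin 0 (Ioi (0:ℝ))) (nhds (m t * G t - I + Φ 0)) :=
        ((continuous_const.add hΦc).tendsto 0).mono_left nhdsWithin_le_nhds
      rw [hΦ0, add_zero] at hcont
      refine Filter.Tendsto.congr' ?_ hcont
      filter_upwards [Ioo_mem_nhdsGT_of_mem (⟨le_refl 0, ht'.1⟩ : (0:ℝ) ∈ Ico 0 t)] with a ha
      exact (heq a ha).symm
    have hL0 : m t * G t - I = 0 := by
      by_contra hL
      set L := m t * G t - I with hLdef
      have hnorm : Filter.Tendsto (fun a => ‖m a * G a‖) (nhdsWithin 0 (Ioi (0:ℝ)))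
          (nhds ‖L‖) := htend.norm
      have hLpos : 0 < ‖L‖ := norm_pos_iff.mpr hL
      have hev : ∀ᶠ a in nhdsWithin 0 (Ioi (0:ℝ)), ‖L‖/2 < ‖m a * G a‖ :=
        hnorm.eventually (eventually_gt_nhds (by linarith))
      have hev2 : ∀ᶠ a in nhdsWithin 0 (Ioi (0:ℝ)), a ∈ Ioo (0:ℝ) t :=
        Ioo_mem_nhdsGT_of_mem (⟨le_refl 0, ht'.1⟩ : (0:ℝ) ∈ Ico 0 t)
      obtain ⟨δ, hδmem, hδsub⟩ :=
        mem_nhdsGT_iff_exists_Ioc_subset.mp (hev.and hev2)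
      have hδ0 : (0:ℝ) < δ := hδmem
      set δ' := min δ t with hδ'def
      have hδ'0 : 0 < δ' := lt_min hδ0 ht'.1
      have hδ'le1 : δ' ≤ 1 := le_trans (min_le_right _ _) ht'.2
      have hCpos : 0 < C := by
        have ha₀ : δ'/2 ∈ Ioc (0:ℝ) δ :=
          ⟨by positivity, by
            have := min_le_left δ t; rw [hδ'def] at *; linarith⟩
        obtain ⟨h1, h2⟩ := hδsub ha₀
        rcases lt_or_eq_of_le hC0 with hC | hC
        · exact hC
        · exfalso
          have hGz : ‖G (δ'/2)‖ ≤ 0 := by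
            have := hGb (δ'/2) ⟨h2.1, h2.2.le.trans ht'.2⟩
            rw [← hC] at this
            simpa using this
          have : ‖m (δ'/2) * G (δ'/2)‖ = 0 := by
            rw [norm_mul]
            nlinarith [norm_nonneg (m (δ'/2)), norm_nonneg (G (δ'/2))]
          rw [this] at h1
          linarith
      set c := ‖L‖/2 / C with hcdef
      have hcpos : 0 < c := by positivity
      have hmlow : ∀ a ∈ Ioo (0:ℝ) δ', c * a ^ (-θ) ≤ ‖m a‖ := by
        intro a haa
        have haδ : a ∈ Ioc (0:ℝ) δ := ⟨haa.1, (haa.2.trans_le (min_le_left _ _)).le⟩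
        obtain ⟨h1, h2⟩ := hδsub haδ
        have haI : a ∈ Ioc (0:ℝ) 1 := ⟨haa.1, h2.2.le.trans ht'.2⟩
        have hGa := hGb a haI
        have hapow : 0 < a ^ θ := Real.rpow_pos_of_pos haa.1 θ
        have h3 : ‖L‖/2 ≤ ‖m a‖ * (C * a ^ θ) := by
          calc ‖L‖/2 ≤ ‖m a * G a‖ := h1.le
            _ = ‖m a‖ * ‖G a‖ := norm_mul _ _
            _ ≤ ‖m a‖ * (C * a ^ θ) := mul_le_mul_of_nonneg_left hGa (norm_nonneg _)
        have h4 : ‖L‖/2 / (C * a ^ θ) ≤ ‖m a‖ :=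
          (div_le_iff₀ (by positivity)).mpr h3
        calc c * a ^ (-θ) = ‖L‖/2 / (C * a ^ θ) := by
              rw [hcdef, Real.rpow_neg haa.1.le, ← div_eq_mul_inv, div_div]
          _ ≤ ‖m a‖ := h4
      have hmfin : ∫⁻ s in Ioo (0:ℝ) δ', (‖m s‖₊ : ℝ≥0∞) ^ vt ∂volume < ⊤ := by
        have h1 : eLpNorm m v mu01 < ⊤ := hmv.2
        rw [eLpNorm_eq_lintegral_rpow_enorm_toReal hv0' hvT,
          ENNReal.rpow_lt_top_iff_of_pos (by positivity : (0:ℝ) < 1/vt)] at h1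
        refine lt_of_le_of_lt ?_ h1
        rw [mu01]
        exact lintegral_mono' (Measure.restrict_mono
          ((fun y hy => mem_Icc.mpr ⟨hy.1.le, hy.2.le.trans hδ'le1⟩) :
            Ioo (0:ℝ) δ' ⊆ Icc (0:ℝ) 1) le_rfl) le_rfl
      have hlow : ∀ a ∈ Ioo (0:ℝ) δ',
          ENNReal.ofReal (c ^ vt * a ^ (-(θ * vt))) ≤ (‖m a‖₊ : ℝ≥0∞) ^ vt := by
        intro a haa
        have h1 := hmlow a haa
        have h2 : (c * a ^ (-θ)) ^ vt ≤ ‖m a‖ ^ vt :=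
          Real.rpow_le_rpow (mul_nonneg hcpos.le (Real.rpow_nonneg haa.1.le _)) h1 hvt0.le
        have h3 : (c * a ^ (-θ)) ^ vt = c ^ vt * a ^ (-(θ * vt)) := by
          rw [Real.mul_rpow hcpos.le (Real.rpow_nonneg haa.1.le _),
            ← Real.rpow_mul haa.1.le]
          ring_nf
        calc ENNReal.ofReal (c ^ vt * a ^ (-(θ * vt)))
            = ENNReal.ofReal ((c * a ^ (-θ)) ^ vt) := by rw [h3]
          _ ≤ ENNReal.ofReal (‖m a‖ ^ vt) := ENNReal.ofReal_le_ofReal h2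
          _ = (‖m a‖₊ : ℝ≥0∞) ^ vt := by
              rw [← ENNReal.ofReal_rpow_of_nonneg (norm_nonneg _) hvt0.le,
                ofReal_norm, enorm_eq_nnnorm]
      have hψfin : ∫⁻ a in Ioo (0:ℝ) δ', ENNReal.ofReal (c ^ vt * a ^ (-(θ * vt))) ∂volume < ⊤ :=
        lt_of_le_of_lt (setLIntegral_mono' measurableSet_Ioo hlow) hmfin
      have hψm : AEStronglyMeasurable (fun a : ℝ => c ^ vt * a ^ (-(θ * vt)))
          (volume.restrict (Ioo 0 δ')) := by
        refine ContinuousOn.aestronglyMeasurable ?_ measurableSet_Ioo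
        intro x hx
        exact continuousWithinAt_const.mul
          ((Real.continuousAt_rpow_const x _ (Or.inl (ne_of_gt hx.1))).continuousWithinAt)
      have hψint : IntegrableOn (fun a : ℝ => c ^ vt * a ^ (-(θ * vt))) (Ioo 0 δ') volume := by
        refine ⟨hψm, ?_⟩
        rw [hasFiniteIntegral_def]
        refine lt_of_le_of_lt (le_of_eq ?_) hψfin
        refine setLIntegral_congr_fun measurableSet_Ioo
          (fun a ha => ?_)
        rw [← ofReal_norm, Real.norm_of_nonneg
          (mul_nonneg (Real.rpow_nonneg hcpos.le vt) (Real.rpow_nonneg ha.1.le _))]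
      have hθint : IntegrableOn (fun a : ℝ => a ^ (-(θ * vt))) (Ioo 0 δ') volume := by
        have h2 := hψint.const_mul ((c ^ vt)⁻¹)
        refine h2.congr (Filter.Eventually.of_forall (fun a => ?_))
        show (c ^ vt)⁻¹ * (c ^ vt * a ^ (-(θ * vt))) = a ^ (-(θ * vt))
        rw [← mul_assoc, inv_mul_cancel₀ (ne_of_gt (Real.rpow_pos_of_pos hcpos vt)), one_mul]
      rw [intervalIntegral.integrableOn_Ioo_rpow_iff hδ'0] at hθint
      linarith
    rw [← hGg t ht]
    exact sub_eq_zero.mp hL0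
end

section
/- Let r > p > 1 with conjugate exponent r' of r, let m' be a measurable function on (0,1] with m'·χ_{[ε,1]} ∈ L^p for every ε ∈ (0,1], and let g ∈ AC_r. Then ‖m'·g‖_{L^p[0,1]} ≤ ‖g'‖_r · ( Σ_{n=1}^∞ 2^{−(n−1)p/r'} ∫_{2^{−n}}^{2^{−n+1}} |m'(t)|^p dt )^{1/p}. In particular, if Σ_{n=1}^∞ (2^{−n/r'} ‖m'·χ_{(2^{−n},2^{−n+1}]}‖_p)^p < ∞ then m'·g ∈ L^p[0,1]. -/
open MeasureTheory Set
open scoped ENNReal NNReal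

/-- key estimate in Theorem 6.  Let `r > p > 1` with `q = r'`
the conjugate exponent of `r`, let `m'` be measurable with `m'·χ_{[ε,1]} ∈ L^p`
for every `ε ∈ (0,1]`, and let `g ∈ AC_r` with derivative `g'`.  Then
`‖m' g‖_p ≤ ‖g'‖_r (Σ_{n≥1} 2^{−(n−1)p/r'} ∫_{2^{−n}}^{2^{−n+1}} |m'|^p)^{1/p}`
(the sum below is indexed by `n : ℕ` corresponding to the paper's `n − 1`).
In particular, if `Σ_{n≥1} (2^{−n/r'} ‖m'·χ_{(2^{−n},2^{−n+1}]}‖_p)^p < ∞`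
then `m' g ∈ L^p[0,1]`. -/
theorem eLpNorm_deriv_mul_le
    (p r q : ℝ≥0∞) (hp : 1 < p) (hpr : p < r) (hq : r⁻¹ + q⁻¹ = 1)
    (m' : ℝ → ℂ) (hm'meas : Measurable m')
    (hm'p : ∀ ε ∈ Set.Ioc (0 : ℝ) 1, MemLp ((Set.Icc ε 1).indicator m') p mu01)
    (g g' : ℝ → ℂ) (hg' : MemLp g' r mu01)
    (hg : ∀ t ∈ Set.Icc (0 : ℝ) 1, g t = ∫ s in Set.Ioc (0 : ℝ) t, g' s) :
    eLpNorm (fun t => m' t * g t) p mu01 ≤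
      eLpNorm g' r mu01 *
        (∑' n : ℕ,
          ENNReal.ofReal ((2 : ℝ) ^ (-(n : ℝ) * p.toReal * (q⁻¹).toReal)) *
            ∫⁻ t in Set.Ioc ((2 : ℝ) ^ (-((n : ℝ) + 1))) ((2 : ℝ) ^ (-(n : ℝ))),
              (‖m' t‖₊ : ℝ≥0∞) ^ p.toReal) ^ (1 / p.toReal) ∧
    ((∑' n : ℕ,
        (ENNReal.ofReal ((2 : ℝ) ^ (-((n : ℝ) + 1) * (q⁻¹).toReal)) *
          eLpNorm ((Set.Ioc ((2 : ℝ) ^ (-((n : ℝ) + 1))) ((2 : ℝ) ^ (-(n : ℝ)))).indicator m')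
            p mu01) ^ p.toReal < ⊤) →
      MemLp (fun t => m' t * g t) p mu01) := by
  have hp0 : p ≠ 0 := (zero_lt_one.trans hp).ne'
  have hpfin : p ≠ ∞ := (hpr.trans_le le_top).ne
  set pt := p.toReal with hptdef
  have hpt1 : 1 < pt := by
    have := (ENNReal.toReal_lt_toReal (by simp) hpfin).mpr hp
    simpa using this
  have hpt0 : 0 < pt := lt_trans zero_lt_one hpt1
  have hptne : pt ≠ 0 := hpt0.ne'
  have hr1 : 1 < r := hp.trans hpr
  set c := (q⁻¹).toReal with hcdef
  have hc0 : 0 ≤ c := ENNReal.toReal_nonneg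
  -- exponent identity
  have hrinvne : r⁻¹ ≠ ∞ := by
    intro h
    rw [ENNReal.inv_eq_top] at h
    exact (zero_lt_one.trans hr1).ne' h
  have hqinvne : q⁻¹ ≠ ∞ := by
    intro h
    rw [h] at hq
    simp [ENNReal.add_eq_top] at hq
  have hsum : (r⁻¹).toReal + c = 1 := by
    rw [hcdef, ← ENNReal.toReal_add hrinvne hqinvne, hq, ENNReal.toReal_one]
  have hcr : 1 / (1 : ℝ≥0∞).toReal - 1 / r.toReal = c := by
    rw [ENNReal.toReal_one]
    have : (r⁻¹).toReal = r.toReal⁻¹ := ENNReal.toReal_inv r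
    rw [this] at hsum
    rw [one_div, one_div]
    linarith [hsum]
  set A := eLpNorm g' r mu01 with hAdef
  have hAne : A ≠ ∞ := hg'.eLpNorm_ne_top
  -- key pointwise bound
  have key : ∀ t ∈ Set.Ioc (0 : ℝ) 1, (‖g t‖₊ : ℝ≥0∞) ≤ A * ENNReal.ofReal t ^ c := by
    intro t ht
    have hsub : Set.Ioc (0 : ℝ) t ⊆ Set.Icc (0 : ℝ) 1 := fun x hx => ⟨hx.1.le, hx.2.trans ht.2⟩
    set ν := volume.restrict (Set.Ioc (0 : ℝ) t) with hν
    have hνle : ν ≤ mu01 := Measure.restrict_mono hsub le_rfl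
    rw [hg t ⟨ht.1.le, ht.2⟩]
    calc (‖∫ s in Set.Ioc (0 : ℝ) t, g' s‖₊ : ℝ≥0∞)
        ≤ ∫⁻ s, ‖g' s‖₊ ∂ν := enorm_integral_le_lintegral_enorm _
      _ = eLpNorm g' 1 ν := (eLpNorm_one_eq_lintegral_enorm (f := g') (μ := ν)).symm
      _ ≤ eLpNorm g' r ν * ν Set.univ ^ (1 / (1 : ℝ≥0∞).toReal - 1 / r.toReal) :=
          eLpNorm_le_eLpNorm_mul_rpow_measure_univ hr1.le (hg'.1.mono_measure hνle)
      _ ≤ A * ENNReal.ofReal t ^ c := by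
          have h1 : eLpNorm g' r ν ≤ A := eLpNorm_mono_measure _ hνle
          have h2 : ν Set.univ = ENNReal.ofReal t := by
            rw [hν, Measure.restrict_apply_univ, Real.volume_Ioc, sub_zero]
          rw [h2, hcr]
          exact mul_le_mul' h1 le_rfl
  -- dyadic decomposition
  set E : ℕ → Set ℝ := fun n => Set.Ioc ((2 : ℝ) ^ (-((n : ℝ) + 1))) ((2 : ℝ) ^ (-(n : ℝ))) with hEdef
  have hpow_pos : ∀ x : ℝ, 0 < (2 : ℝ) ^ x := fun x => Real.rpow_pos_of_pos two_pos x
  have hEsub : ∀ n, E n ⊆ Set.Ioc (0 : ℝ) 1 := by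
    intro n x hx
    refine ⟨lt_trans (hpow_pos _) hx.1, hx.2.trans ?_⟩
    exact Real.rpow_le_one_of_one_le_of_nonpos one_le_two (neg_nonpos.2 (Nat.cast_nonneg n))
  have hmeasE : ∀ n, MeasurableSet (E n) := fun n => measurableSet_Ioc
  have hdisjlt : ∀ m n : ℕ, m < n → Disjoint (E m) (E n) := by
    intro m n hmn
    rw [Set.disjoint_left]
    intro x hxm hxn
    have h1 : (2 : ℝ) ^ (-(n : ℝ)) ≤ (2 : ℝ) ^ (-((m : ℝ) + 1)) := by
      apply Real.rpow_le_rpow_of_exponent_le one_le_two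
      have : (m : ℝ) + 1 ≤ (n : ℝ) := by exact_mod_cast hmn
      linarith
    exact absurd hxm.1 (not_lt.2 (hxn.2.trans h1))
  have hdisj : Pairwise (Function.onFun Disjoint E) := by
    intro m n hmn
    rcases hmn.lt_or_gt with h | h
    · exact hdisjlt m n h
    · exact (hdisjlt n m h).symm
  have hUnion : (⋃ n, E n) = Set.Ioc (0 : ℝ) 1 := by
    apply Set.Subset.antisymm
    · exact Set.iUnion_subset hEsub
    · intro t ht
      have hex : ∃ n : ℕ, (2 : ℝ) ^ (-((n : ℝ) + 1)) < t := by
        obtain ⟨n, hn⟩ := exists_pow_lt_of_lt_one ht.1 (by norm_num : (1 : ℝ) / 2 < 1)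
        refine ⟨n, lt_of_le_of_lt ?_ hn⟩
        have h1 : ((1 : ℝ) / 2) ^ n = (2 : ℝ) ^ (-(n : ℝ)) := by
          rw [Real.rpow_neg two_pos.le, Real.rpow_natCast, one_div, inv_pow]
        rw [h1]
        apply Real.rpow_le_rpow_of_exponent_le one_le_two
        linarith
      refine Set.mem_iUnion.2 ⟨Nat.find hex, Nat.find_spec hex, ?_⟩
      rcases Nat.eq_zero_or_pos (Nat.find hex) with h0 | hpos
      · rw [h0]
        simpa using ht.2
      · obtain ⟨k, hk⟩ := Nat.exists_eq_succ_of_ne_zero hpos.ne'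
        have hmin := Nat.find_min hex (by omega : k < Nat.find hex)
        push_neg at hmin
        rw [hk]
        have : ((k + 1 : ℕ) : ℝ) = (k : ℝ) + 1 := by push_cast; ring
        rw [this]
        exact hmin
  have hmu : mu01 = volume.restrict (Set.Ioc (0 : ℝ) 1) := by
    rw [mu01]
    exact (Measure.restrict_congr_set Ioc_ae_eq_Icc).symm
  -- abbreviations for the sums
  set S := ∑' n : ℕ,
      ENNReal.ofReal ((2 : ℝ) ^ (-(n : ℝ) * pt * c)) *
        ∫⁻ t in E n, (‖m' t‖₊ : ℝ≥0∞) ^ pt with hSdef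
  have hm'pow : Measurable fun t => (‖m' t‖₊ : ℝ≥0∞) ^ pt :=
    ENNReal.continuous_rpow_const.measurable.comp hm'meas.enorm
  -- main integral bound
  have hInt : (∫⁻ t, (‖m' t * g t‖₊ : ℝ≥0∞) ^ pt ∂mu01) ≤ A ^ pt * S := by
    rw [hmu, ← hUnion, lintegral_iUnion hmeasE hdisj]
    rw [hSdef, ← ENNReal.tsum_mul_left]
    apply ENNReal.tsum_le_tsum
    intro n
    have hconst : (A * ENNReal.ofReal ((2 : ℝ) ^ (-(n : ℝ))) ^ c) ^ pt
        = A ^ pt * ENNReal.ofReal ((2 : ℝ) ^ (-(n : ℝ) * pt * c)) := by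
      rw [ENNReal.mul_rpow_of_nonneg _ _ hpt0.le, ← ENNReal.rpow_mul,
        ENNReal.ofReal_rpow_of_pos (hpow_pos _), ← Real.rpow_mul two_pos.le]
      congr 2
      ring
    calc ∫⁻ t in E n, (‖m' t * g t‖₊ : ℝ≥0∞) ^ pt
        ≤ ∫⁻ t in E n, (A * ENNReal.ofReal ((2 : ℝ) ^ (-(n : ℝ))) ^ c) ^ pt *
            ((‖m' t‖₊ : ℝ≥0∞) ^ pt) := by
          apply setLIntegral_mono' (hmeasE n)
          intro x hx
          have hxI : x ∈ Set.Ioc (0 : ℝ) 1 := hEsub n hx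
          have hgb : (‖g x‖₊ : ℝ≥0∞) ≤ A * ENNReal.ofReal ((2 : ℝ) ^ (-(n : ℝ))) ^ c := by
            refine (key x hxI).trans ?_
            exact mul_le_mul' le_rfl
              (ENNReal.rpow_le_rpow (ENNReal.ofReal_le_ofReal hx.2) hc0)
          have : (‖m' x * g x‖₊ : ℝ≥0∞) ^ pt
              = (‖m' x‖₊ : ℝ≥0∞) ^ pt * (‖g x‖₊ : ℝ≥0∞) ^ pt := by
            rw [nnnorm_mul, ENNReal.coe_mul, ENNReal.mul_rpow_of_nonneg _ _ hpt0.le]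
          rw [this, mul_comm ((‖m' x‖₊ : ℝ≥0∞) ^ pt)]
          exact mul_le_mul' (ENNReal.rpow_le_rpow hgb hpt0.le) le_rfl
      _ = A ^ pt * (ENNReal.ofReal ((2 : ℝ) ^ (-(n : ℝ) * pt * c)) *
            ∫⁻ t in E n, (‖m' t‖₊ : ℝ≥0∞) ^ pt) := by
          rw [lintegral_const_mul _ hm'pow, hconst, mul_assoc]
  -- first conclusion
  have main : eLpNorm (fun t => m' t * g t) p mu01 ≤ A * S ^ (1 / pt) := by
    rw [eLpNorm_eq_lintegral_rpow_enorm_toReal hp0 hpfin]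
    calc (∫⁻ t, (‖m' t * g t‖₊ : ℝ≥0∞) ^ pt ∂mu01) ^ (1 / pt)
        ≤ (A ^ pt * S) ^ (1 / pt) := ENNReal.rpow_le_rpow hInt (by positivity)
      _ = A * S ^ (1 / pt) := by
          rw [ENNReal.mul_rpow_of_nonneg _ _ (by positivity), ← ENNReal.rpow_mul,
            mul_one_div_cancel hptne, ENNReal.rpow_one]
  refine ⟨main, ?_⟩
  -- second part
  intro hT
  set T := ∑' n : ℕ,
      (ENNReal.ofReal ((2 : ℝ) ^ (-((n : ℝ) + 1) * c)) *
        eLpNorm ((E n).indicator m') p mu01) ^ pt with hTdef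
  -- identify the indicator norms with the dyadic integrals
  have hEIcc : ∀ n, E n ⊆ Set.Icc (0 : ℝ) 1 := fun n =>
    (hEsub n).trans Set.Ioc_subset_Icc_self
  have hNn : ∀ n, eLpNorm ((E n).indicator m') p mu01 ^ pt
      = ∫⁻ t in E n, (‖m' t‖₊ : ℝ≥0∞) ^ pt := by
    intro n
    rw [eLpNorm_eq_lintegral_rpow_enorm_toReal hp0 hpfin, ← ENNReal.rpow_mul,
      one_div, inv_mul_cancel₀ hptne, ENNReal.rpow_one]
    have hpoint : ∀ x, (‖(E n).indicator m' x‖₊ : ℝ≥0∞) ^ pt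
        = (E n).indicator (fun t => (‖m' t‖₊ : ℝ≥0∞) ^ pt) x := by
      intro x
      by_cases hx : x ∈ E n
      · simp [Set.indicator_of_mem hx]
      · simp [Set.indicator_of_notMem hx, ENNReal.zero_rpow_of_pos hpt0]
    simp_rw [enorm_eq_nnnorm, ← hptdef, hpoint]
    rw [lintegral_indicator (hmeasE n), hmu, Measure.restrict_restrict (hmeasE n),
      Set.inter_eq_left.2 (hEsub n)]
  -- S ≤ const * T
  have hSle : S ≤ ENNReal.ofReal ((2 : ℝ) ^ (pt * c)) * T := by
    rw [hTdef, ← ENNReal.tsum_mul_left, hSdef]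
    apply ENNReal.tsum_le_tsum
    intro n
    apply le_of_eq
    rw [ENNReal.mul_rpow_of_nonneg _ _ hpt0.le, hNn n,
      ENNReal.ofReal_rpow_of_pos (hpow_pos _), ← Real.rpow_mul two_pos.le, ← mul_assoc,
      ← ENNReal.ofReal_mul (Real.rpow_nonneg two_pos.le _), ← Real.rpow_add two_pos]
    congr 3
    ring
  have hSfin : S ≠ ⊤ := by
    refine (lt_of_le_of_lt hSle (ENNReal.mul_lt_top ENNReal.ofReal_lt_top ?_)).ne
    exact hT
  -- measurability of g via continuous primitive
  haveI : IsFiniteMeasure mu01 := by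
    constructor
    rw [mu01, Measure.restrict_apply_univ, Real.volume_Icc]
    exact ENNReal.ofReal_lt_top
  have hint : Integrable g' mu01 := hg'.integrable hr1.le
  set g'' := hg'.1.mk g' with hg''def
  have hae : g' =ᵐ[mu01] g'' := hg'.1.ae_eq_mk
  set G2 := (Set.Ioc (0 : ℝ) 1).indicator g'' with hG2def
  have hle01 : volume.restrict (Set.Ioc (0 : ℝ) 1) ≤ mu01 :=
    Measure.restrict_mono Set.Ioc_subset_Icc_self le_rfl
  have hG2int : Integrable G2 volume := by
    rw [hG2def, integrable_indicator_iff measurableSet_Ioc]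
    exact (hint.congr hae).mono_measure hle01
  have hPcont : Continuous fun t => ∫ s in (0 : ℝ)..t, G2 s :=
    hG2int.continuous_primitive 0
  have hgP : ∀ t ∈ Set.Icc (0 : ℝ) 1, g t = ∫ s in (0 : ℝ)..t, G2 s := by
    intro t ht
    rw [hg t ht, intervalIntegral.integral_of_le ht.1]
    have hsub2 : Set.Ioc (0 : ℝ) t ⊆ Set.Icc (0 : ℝ) 1 := fun x hx => ⟨hx.1.le, hx.2.trans ht.2⟩
    have hle : volume.restrict (Set.Ioc (0 : ℝ) t) ≤ mu01 :=
      Measure.restrict_mono hsub2 le_rfl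
    have h1 : ∫ s in Set.Ioc (0 : ℝ) t, g' s = ∫ s in Set.Ioc (0 : ℝ) t, g'' s :=
      integral_congr_ae (hae.filter_mono (ae_mono hle))
    rw [h1]
    apply setIntegral_congr_fun measurableSet_Ioc
    intro x hx
    have hx1 : x ∈ Set.Ioc (0 : ℝ) 1 := ⟨hx.1, hx.2.trans ht.2⟩
    exact (Set.indicator_of_mem hx1 g'').symm
  have hgae : g =ᵐ[mu01] fun t => ∫ s in (0 : ℝ)..t, G2 s := by
    rw [mu01]
    exact (ae_restrict_iff' measurableSet_Icc).mpr (Filter.Eventually.of_forall hgP)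
  have hsm : AEStronglyMeasurable (fun t => m' t * g t) mu01 :=
    hm'meas.stronglyMeasurable.aestronglyMeasurable.mul
      (hPcont.aestronglyMeasurable.congr hgae.symm)
  refine ⟨hsm, lt_of_le_of_lt main ?_⟩
  exact ENNReal.mul_lt_top hAne.lt_top (ENNReal.rpow_lt_top_of_nonneg (by positivity) hSfin)
end

section
/- Let r > p > 1, define v by 1/v = 1/p − 1/r, let 0 < δ < 1/v, and let m(t) = t^{−1/v+δ} for t ∈ (0,1], so that m'(t) = (−1/v+δ) t^{−1/v+δ−1}. Then m ∈ L^v(0,1] and Σ_{n=1}^∞ (2^{−n/r'} ‖m'·χ_{(2^{−n},2^{−n+1}]}‖_p)^p < ∞; consequently, for every g ∈ AC_r the product mg (extended by (mg)(0) = 0) belongs to AC_p, i.e., m defines a multiplier from AC_r to AC_p even though m is unbounded. -/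
open MeasureTheory Set
open scoped ENNReal NNReal

lemma integrableOn_rpow01 {β : ℝ} (hβ : -1 < β) :
    IntegrableOn (fun t : ℝ => t ^ β) (Icc 0 1) volume := by
  have h1 : IntegrableOn (fun t : ℝ => t ^ β) (Ioc 0 1) volume :=
    (intervalIntegrable_iff_integrableOn_Ioc_of_le zero_le_one).1
      (intervalIntegral.intervalIntegrable_rpow' hβ)
  exact h1.congr_set_ae Ioc_ae_eq_Icc.symm

lemma memLp_rpow01 {β q : ℝ} (hq : 0 < q) (h : -1 < β * q) :
    MemLp (fun t : ℝ => ((t ^ β : ℝ) : ℂ)) (ENNReal.ofReal q) mu01 := by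
  have h0 : ENNReal.ofReal q ≠ 0 := by simp [ENNReal.ofReal_eq_zero, not_le, hq]
  have htop : ENNReal.ofReal q ≠ ∞ := ENNReal.ofReal_ne_top
  have hfm : AEStronglyMeasurable (fun t : ℝ => ((t ^ β : ℝ) : ℂ)) mu01 :=
    (by fun_prop : Measurable fun t : ℝ => ((t ^ β : ℝ) : ℂ)).aestronglyMeasurable
  refine (memLp_norm_rpow_iff hfm h0 htop).1 ?_
  rw [ENNReal.div_self h0 htop, memLp_one_iff_integrable, ENNReal.toReal_ofReal hq.le]
  refine (integrableOn_rpow01 h).congr ?_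
  refine (ae_restrict_iff' measurableSet_Icc).2 (Filter.Eventually.of_forall fun t ht => ?_)
  have ht0 : (0:ℝ) ≤ t := ht.1
  simp only []
  rw [Real.rpow_mul ht0, Complex.norm_real, Real.norm_eq_abs,
    abs_of_nonneg (Real.rpow_nonneg ht0 β)]

set_option maxHeartbeats 1000000 in
/-- Example 1.  Let `r > p > 1` (real exponents), `1/v = 1/p − 1/r`,
`r'` the conjugate exponent of `r`, and `0 < δ < 1/v`.  Let `m t = t^{−1/v+δ}`,
so `m' t = (−1/v+δ) t^{−1/v+δ−1}`.  Then `m ∈ L^v(0,1]`,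
`Σ_{n≥1} (2^{−n/r'} ‖m'·χ_{(2^{−n},2^{−n+1}]}‖_p)^p < ∞` (blocks indexed by
`n : ℕ` ↔ paper's `n + 1`); consequently for every `g ∈ AC_r` the product `mg`
(extended by `(mg)(0) = 0`) belongs to `AC_p`: the unbounded function `m`
defines a multiplier from `AC_r` to `AC_p`. -/
theorem example_multiplier_rpow
    (p r v r' δ : ℝ) (hp : 1 < p) (hpr : p < r)
    (hv : v⁻¹ = p⁻¹ - r⁻¹) (hr' : r⁻¹ + r'⁻¹ = 1)
    (hδ0 : 0 < δ) (hδv : δ < v⁻¹) :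
    MemLp (fun t : ℝ => ((t ^ (-v⁻¹ + δ) : ℝ) : ℂ)) (ENNReal.ofReal v) mu01 ∧
    (∑' n : ℕ,
      (ENNReal.ofReal ((2 : ℝ) ^ (-((n : ℝ) + 1) / r')) *
        eLpNorm ((Set.Ioc ((2 : ℝ) ^ (-((n : ℝ) + 1))) ((2 : ℝ) ^ (-(n : ℝ)))).indicator
            (fun t : ℝ => (((-v⁻¹ + δ) * t ^ (-v⁻¹ + δ - 1) : ℝ) : ℂ)))
          (ENNReal.ofReal p) mu01) ^ p < ⊤) ∧
    (∀ g g' : ℝ → ℂ, MemLp g' (ENNReal.ofReal r) mu01 →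
      (∀ t ∈ Set.Icc (0 : ℝ) 1, g t = ∫ s in Set.Ioc (0 : ℝ) t, g' s) →
      ∃ D : ℝ → ℂ, MemLp D (ENNReal.ofReal p) mu01 ∧
        ∀ t ∈ Set.Icc (0 : ℝ) 1,
          (if t = 0 then 0 else ((t ^ (-v⁻¹ + δ) : ℝ) : ℂ) * g t) =
            ∫ s in Set.Ioc (0 : ℝ) t, D s) := by
  -- basic positivity facts
  have hp0 : (0:ℝ) < p := by linarith
  have hr1 : (1:ℝ) < r := by linarith
  have hr0 : (0:ℝ) < r := by linarith
  have hrinv : (0:ℝ) < r⁻¹ := by positivity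
  have hvinv : (0:ℝ) < v⁻¹ := by
    rw [hv]; have := (inv_strictAnti₀ hp0 hpr); linarith
  have hv0 : (0:ℝ) < v := inv_pos.1 hvinv
  have hrinv1 : r⁻¹ < 1 := by
    rw [inv_lt_one_iff₀]; right; exact hr1
  have hr'inv : (0:ℝ) < r'⁻¹ := by linarith
  have hr'0 : (0:ℝ) < r' := inv_pos.1 hr'inv
  set α : ℝ := -v⁻¹ + δ with hα
  have hαneg : α < 0 := by simp [hα]; linarith
  have hαgt : -v⁻¹ < α := by simp [hα]; linarith
  -- part A
  have partA : MemLp (fun t : ℝ => ((t ^ α : ℝ) : ℂ)) (ENNReal.ofReal v) mu01 := by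
    refine memLp_rpow01 hv0 ?_
    have h1 : α * v = -1 + δ * v := by
      rw [hα]; field_simp
    rw [h1]; nlinarith
  have hPp0 : ENNReal.ofReal p ≠ 0 := by simp [ENNReal.ofReal_eq_zero, not_le, hp0]
  have hPpt : ENNReal.ofReal p ≠ ∞ := ENNReal.ofReal_ne_top
  have hα0 : α ≠ 0 := ne_of_lt hαneg
  have hαabs : 0 < |α| := abs_pos.2 hα0
  refine ⟨partA, ?_, ?_⟩
  · -- part B
    set x : ℝ≥0∞ := ENNReal.ofReal ((2:ℝ) ^ (-(δ * p))) with hx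
    have hy0 : (0:ℝ) < (2:ℝ) ^ (-(δ * p)) := Real.rpow_pos_of_pos two_pos _
    have hx1 : x < 1 := by
      rw [hx]
      calc ENNReal.ofReal ((2:ℝ) ^ (-(δ * p))) < ENNReal.ofReal 1 := by
            rw [ENNReal.ofReal_lt_ofReal_iff (by norm_num)]
            exact Real.rpow_lt_one_of_one_lt_of_neg one_lt_two (by nlinarith)
        _ = 1 := ENNReal.ofReal_one
    have key : ∀ n : ℕ, (ENNReal.ofReal ((2 : ℝ) ^ (-((n : ℝ) + 1) / r')) *
          eLpNorm ((Set.Ioc ((2 : ℝ) ^ (-((n : ℝ) + 1))) ((2 : ℝ) ^ (-(n : ℝ)))).indicator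
              (fun t : ℝ => ((α * t ^ (α - 1) : ℝ) : ℂ))) (ENNReal.ofReal p) mu01) ^ p
        ≤ ENNReal.ofReal (|α| ^ p) * x ^ n := by
      intro n
      set N : ℝ := (n:ℝ) + 1 with hN
      have hN0 : (0:ℝ) < N := by positivity
      set a : ℝ := (2:ℝ) ^ (-N) with ha
      set b : ℝ := (2:ℝ) ^ (-(n:ℝ)) with hb
      have ha0 : (0:ℝ) < a := Real.rpow_pos_of_pos two_pos _
      set C : ℝ := |α| * a ^ (α - 1) with hC
      have hC0 : (0:ℝ) < C := by
        rw [hC]; exact mul_pos hαabs (Real.rpow_pos_of_pos ha0 _)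
      set e : ℝ := (2:ℝ) ^ (-N / r') with he
      have he0 : (0:ℝ) < e := Real.rpow_pos_of_pos two_pos _
      have hba : b = 2 * a := by
        rw [hb, ha, show -(n:ℝ) = -N + 1 by rw [hN]; ring, Real.rpow_add two_pos,
          Real.rpow_one]
        ring
      -- pointwise bound
      have hmono : eLpNorm ((Ioc a b).indicator fun t : ℝ => ((α * t ^ (α - 1) : ℝ) : ℂ))
            (ENNReal.ofReal p) mu01
          ≤ eLpNorm ((Ioc a b).indicator fun _ : ℝ => ((C:ℝ):ℂ)) (ENNReal.ofReal p) mu01 := by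
        refine eLpNorm_mono fun t => ?_
        by_cases ht : t ∈ Ioc a b
        · rw [indicator_of_mem ht, indicator_of_mem ht, Complex.norm_real, Complex.norm_real,
            Real.norm_eq_abs, Real.norm_eq_abs, abs_mul, abs_of_pos hC0, hC]
          have h1 : |t ^ (α-1)| = t ^ (α-1) :=
            abs_of_nonneg (Real.rpow_nonneg (le_of_lt (lt_trans ha0 ht.1)) _)
          rw [h1]
          exact mul_le_mul_of_nonneg_left
            (Real.rpow_le_rpow_of_nonpos ha0 ht.1.le (by linarith)) (abs_nonneg α)
        · rw [indicator_of_notMem ht, indicator_of_notMem ht]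
      have hconst : eLpNorm ((Ioc a b).indicator fun _ : ℝ => ((C:ℝ):ℂ)) (ENNReal.ofReal p) mu01
          = ENNReal.ofReal C * mu01 (Ioc a b) ^ (1 / p) := by
        rw [eLpNorm_indicator_const measurableSet_Ioc hPp0 hPpt, ENNReal.toReal_ofReal hp0.le,
          ← ofReal_norm, Complex.norm_real, Real.norm_eq_abs, abs_of_pos hC0]
      have hmu : mu01 (Ioc a b) ≤ ENNReal.ofReal a := by
        rw [mu01, Measure.restrict_apply measurableSet_Ioc]
        calc volume (Ioc a b ∩ Icc 0 1) ≤ volume (Ioc a b) := measure_mono inter_subset_left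
          _ = ENNReal.ofReal (b - a) := Real.volume_Ioc
          _ = ENNReal.ofReal a := by rw [hba]; ring_nf
      -- assemble
      have hE : ENNReal.ofReal ((e * (C * a ^ (1/p))) ^ p)
          = (ENNReal.ofReal e * (ENNReal.ofReal C * ENNReal.ofReal a ^ (1/p))) ^ p := by
        rw [ENNReal.ofReal_rpow_of_pos ha0, ← ENNReal.ofReal_mul hC0.le,
          ← ENNReal.ofReal_mul he0.le, ENNReal.ofReal_rpow_of_pos (by positivity)]
      have step : (ENNReal.ofReal e *
          eLpNorm ((Ioc a b).indicator fun t : ℝ => ((α * t ^ (α - 1) : ℝ) : ℂ))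
            (ENNReal.ofReal p) mu01) ^ p
          ≤ ENNReal.ofReal ((e * (C * a ^ (1/p))) ^ p) := by
        rw [hE]
        refine ENNReal.rpow_le_rpow ?_ hp0.le
        refine mul_le_mul_right (hmono.trans ?_) _
        rw [hconst]
        exact mul_le_mul_right (ENNReal.rpow_le_rpow hmu (by positivity)) _
      have hsum : r'⁻¹ + (α - 1) + p⁻¹ = δ := by
        have hαe : α = -(p⁻¹ - r⁻¹) + δ := by rw [hα, hv]
        rw [hαe]; linarith
      have h2pow : ∀ y z : ℝ, (2:ℝ)^y * (2:ℝ)^z = 2^(y+z) :=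
        fun y z => (Real.rpow_add two_pos y z).symm
      have h3 : a ^ (α-1) = (2:ℝ) ^ (-N*(α-1)) := by
        rw [ha, ← Real.rpow_mul (by norm_num : (0:ℝ) ≤ 2)]
      have h4 : a ^ (1/p) = (2:ℝ) ^ (-N*(1/p)) := by
        rw [ha, ← Real.rpow_mul (by norm_num : (0:ℝ) ≤ 2)]
      have h5 : e * (C * a ^ (1/p)) = |α| * (2:ℝ) ^ (-(δ*N)) := by
        rw [he, hC, h3, h4]
        calc (2:ℝ)^(-N/r') * (|α| * (2:ℝ)^(-N*(α-1)) * (2:ℝ)^(-N*(1/p)))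
            = |α| * ((2:ℝ)^(-N/r') * ((2:ℝ)^(-N*(α-1)) * (2:ℝ)^(-N*(1/p)))) := by ring
          _ = |α| * (2:ℝ)^(-N/r' + (-N*(α-1) + -N*(1/p))) := by rw [h2pow, h2pow]
          _ = |α| * (2:ℝ)^(-(δ*N)) := by
              congr 1
              have hexp : -N/r' + (-N*(α-1) + -N*(1/p)) = -(δ*N) := by
                rw [div_eq_mul_inv, one_div]
                linear_combination (-N) * hsum
              rw [hexp]
      have hreal : (e * (C * a ^ (1/p))) ^ p = |α| ^ p * ((2:ℝ) ^ (-(δ*p))) ^ (n+1 : ℕ) := by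
        rw [h5, Real.mul_rpow (abs_nonneg _) (Real.rpow_nonneg (by norm_num) _),
          ← Real.rpow_natCast ((2:ℝ) ^ (-(δ*p))) (n+1),
          ← Real.rpow_mul (by norm_num : (0:ℝ) ≤ 2),
          ← Real.rpow_mul (by norm_num : (0:ℝ) ≤ 2)]
        congr 2
        push_cast
        rw [hN]
        ring
      calc (ENNReal.ofReal e *
          eLpNorm ((Ioc a b).indicator fun t : ℝ => ((α * t ^ (α - 1) : ℝ) : ℂ))
            (ENNReal.ofReal p) mu01) ^ p
          ≤ ENNReal.ofReal ((e * (C * a ^ (1/p))) ^ p) := step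
        _ = ENNReal.ofReal (|α| ^ p) * x ^ (n+1) := by
            rw [hreal, ENNReal.ofReal_mul (by positivity), ENNReal.ofReal_pow hy0.le, hx]
        _ ≤ ENNReal.ofReal (|α| ^ p) * x ^ n := by
            refine mul_le_mul_right ?_ _
            calc x ^ (n+1) = x ^ n * x := pow_succ x n
              _ ≤ x ^ n * 1 := mul_le_mul_right hx1.le _
              _ = x ^ n := mul_one _
    calc (∑' n : ℕ, (ENNReal.ofReal ((2 : ℝ) ^ (-((n : ℝ) + 1) / r')) *
          eLpNorm ((Set.Ioc ((2 : ℝ) ^ (-((n : ℝ) + 1))) ((2 : ℝ) ^ (-(n : ℝ)))).indicator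
              (fun t : ℝ => ((α * t ^ (α - 1) : ℝ) : ℂ))) (ENNReal.ofReal p) mu01) ^ p)
        ≤ ∑' n : ℕ, ENNReal.ofReal (|α| ^ p) * x ^ n := ENNReal.tsum_le_tsum key
      _ = ENNReal.ofReal (|α| ^ p) * (1 - x)⁻¹ := by
          rw [ENNReal.tsum_mul_left, ENNReal.tsum_geometric]
      _ < ⊤ := ENNReal.mul_lt_top ENNReal.ofReal_lt_top
          (ENNReal.inv_lt_top.2 (tsub_pos_iff_lt.2 hx1))
  · -- part C
    intro g g' hg' hgid
    haveI : IsFiniteMeasure mu01 := by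
      rw [mu01]; infer_instance
    have hP1 : 1 ≤ ENNReal.ofReal p := by
      rw [← ENNReal.ofReal_one]; exact ENNReal.ofReal_le_ofReal hp.le
    have hR1 : 1 ≤ ENNReal.ofReal r := by
      rw [← ENNReal.ofReal_one]; exact ENNReal.ofReal_le_ofReal hr1.le
    have hconj : r.HolderConjugate r' := Real.holderConjugate_iff.mpr ⟨hr1, hr'⟩
    have hg'i : Integrable g' mu01 := hg'.integrable hR1
    have hgmeas : AEStronglyMeasurable g mu01 := by
      have hcont : ContinuousOn (fun x => ∫ s in Ioc 0 x, g' s) (Icc (0:ℝ) 1) :=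
        intervalIntegral.continuousOn_primitive (by exact hg'i)
      exact (hcont.aestronglyMeasurable measurableSet_Icc).congr
        ((ae_restrict_iff' measurableSet_Icc).2
          (Filter.Eventually.of_forall fun t ht => (hgid t ht).symm))
    set A : ℝ := (∫ s, ‖g' s‖ ^ r ∂mu01) ^ (1/r) with hA
    have hA0 : (0:ℝ) ≤ A :=
      Real.rpow_nonneg (integral_nonneg fun s => Real.rpow_nonneg (norm_nonneg _) _) _
    have hgr_int : Integrable (fun s => ‖g' s‖ ^ r) mu01 := by
      have h := hg'.integrable_norm_rpow (by simp [ENNReal.ofReal_eq_zero, not_le, hr0])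
        ENNReal.ofReal_ne_top
      simpa [ENNReal.toReal_ofReal hr0.le] using h
    have key : ∀ u ∈ Icc (0:ℝ) 1, (∫ s in Ioc 0 u, ‖g' s‖) ≤ A * u ^ r'⁻¹ := by
      intro u hu
      have h01 : Ioc (0:ℝ) u ⊆ Icc 0 1 := fun s hs => ⟨hs.1.le, hs.2.trans hu.2⟩
      have hg'u : MemLp (fun s => ‖g' s‖) (ENNReal.ofReal r) (volume.restrict (Ioc 0 u)) :=
        hg'.norm.mono_measure (Measure.restrict_mono h01 le_rfl)
      haveI : IsFiniteMeasure (volume.restrict (Ioc (0:ℝ) u)) := by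
        constructor
        rw [Measure.restrict_apply_univ, Real.volume_Ioc]
        exact ENNReal.ofReal_lt_top
      have hone : MemLp (fun _ : ℝ => (1:ℝ)) (ENNReal.ofReal r')
          (volume.restrict (Ioc 0 u)) := memLp_const 1
      have hH := integral_mul_le_Lp_mul_Lq_of_nonneg (μ := volume.restrict (Ioc 0 u)) hconj
        (Filter.Eventually.of_forall fun s => norm_nonneg (g' s))
        (Filter.Eventually.of_forall fun _ => zero_le_one) hg'u hone
      simp only [mul_one, Real.one_rpow] at hH
      have h1 : (∫ _ in Ioc (0:ℝ) u, (1:ℝ)) = u := by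
        simp [Real.volume_Ioc, ENNReal.toReal_ofReal hu.1, hu.1]
      have h2 : (∫ s in Ioc (0:ℝ) u, ‖g' s‖ ^ r) ≤ ∫ s, ‖g' s‖ ^ r ∂mu01 := by
        rw [mu01]
        exact setIntegral_mono_set hgr_int
          (Filter.Eventually.of_forall fun s => Real.rpow_nonneg (norm_nonneg _) _)
          (HasSubset.Subset.eventuallyLE h01)
      calc (∫ s in Ioc 0 u, ‖g' s‖)
          ≤ (∫ s in Ioc 0 u, ‖g' s‖ ^ r) ^ (1/r) * (∫ _ in Ioc (0:ℝ) u, (1:ℝ)) ^ (1/r') := hH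
        _ ≤ A * u ^ r'⁻¹ := by
            rw [h1, hA, ← one_div]
            exact mul_le_mul (Real.rpow_le_rpow
                (integral_nonneg fun s => Real.rpow_nonneg (norm_nonneg _) _) h2 (by positivity))
              le_rfl (Real.rpow_nonneg hu.1 _)
              (Real.rpow_nonneg (integral_nonneg fun s => Real.rpow_nonneg (norm_nonneg _) _) _)
    have hgb : ∀ u ∈ Icc (0:ℝ) 1, ‖g u‖ ≤ A * u ^ r'⁻¹ := by
      intro u hu
      rw [hgid u hu]
      exact (norm_integral_le_integral_norm _).trans (key u hu)
    -- MemLp of the two derivative pieces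
    have hmem_mg' : MemLp (fun s : ℝ => ((s ^ α : ℝ) : ℂ) * g' s) (ENNReal.ofReal p) mu01 := by
      have hpvr : 1 / (ENNReal.ofReal p) = 1 / (ENNReal.ofReal v) + 1 / (ENNReal.ofReal r) := by
        rw [one_div, one_div, one_div, ← ENNReal.ofReal_inv_of_pos hp0,
          ← ENNReal.ofReal_inv_of_pos hv0, ← ENNReal.ofReal_inv_of_pos hr0,
          ← ENNReal.ofReal_add (by positivity) (by positivity)]
        congr 1
        rw [hv]; ring
      have h := hg'.smul (r := ENNReal.ofReal p) partA
        (hpqr := ⟨by simpa only [one_div] using hpvr.symm⟩)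
      have heq : (fun t : ℝ => ((t ^ α : ℝ) : ℂ)) • g' = fun s : ℝ => ((s ^ α : ℝ) : ℂ) * g' s := by
        funext s; simp [smul_eq_mul]
      rwa [heq] at h
    have hWexp1 : (-1:ℝ) < α - 1 + r'⁻¹ := by
      have h1 : α - 1 + r'⁻¹ = δ - p⁻¹ := by rw [hα, hv]; linarith
      have h2 : p⁻¹ < 1 := by rw [inv_lt_one_iff₀]; right; exact hp
      rw [h1]; linarith
    have hmem_m'g : MemLp (fun s : ℝ => ((α * s ^ (α - 1) : ℝ) : ℂ) * g s)
        (ENNReal.ofReal p) mu01 := by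
      have hWexp : -1 < (α - 1 + r'⁻¹) * p := by
        have h1 : α - 1 + r'⁻¹ = δ - p⁻¹ := by rw [hα, hv]; linarith
        have hpinv : p⁻¹ * p = 1 := inv_mul_cancel₀ (ne_of_gt hp0)
        rw [h1]
        nlinarith
      have hW : MemLp (fun s : ℝ => ((s ^ (α - 1 + r'⁻¹) : ℝ) : ℂ)) (ENNReal.ofReal p) mu01 :=
        memLp_rpow01 hp0 hWexp
      have hW2 : MemLp (fun s : ℝ => ((((|α| * A) : ℝ) : ℂ) * ((s ^ (α - 1 + r'⁻¹) : ℝ) : ℂ)))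
          (ENNReal.ofReal p) mu01 := hW.const_mul _
      refine hW2.of_le ?_ ?_
      · exact ((by fun_prop : Measurable fun s : ℝ => ((α * s ^ (α - 1) : ℝ) : ℂ)).aestronglyMeasurable).mul hgmeas
      · refine (ae_restrict_iff' measurableSet_Icc).2 (Filter.Eventually.of_forall fun s hs => ?_)
        rw [norm_mul, norm_mul, Complex.norm_real, Complex.norm_real, Real.norm_eq_abs,
          Real.norm_eq_abs, Complex.norm_real, Real.norm_eq_abs]
        rcases eq_or_lt_of_le hs.1 with h0 | h0
        · rw [← h0, Real.zero_rpow (ne_of_lt (by linarith : α - 1 < 0))]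
          simpa using mul_nonneg (abs_nonneg ((|α| * A : ℝ))) (abs_nonneg _)
        · have h1 : |α * s ^ (α-1)| = |α| * s ^ (α-1) := by
            rw [abs_mul, abs_of_nonneg (Real.rpow_nonneg h0.le _)]
          have h2 : |s ^ (α - 1 + r'⁻¹)| = s ^ (α - 1 + r'⁻¹) :=
            abs_of_nonneg (Real.rpow_nonneg h0.le _)
          rw [h1, h2, abs_mul, abs_of_nonneg (abs_nonneg α), abs_of_nonneg hA0]
          calc |α| * s ^ (α-1) * ‖g s‖ ≤ |α| * s ^ (α-1) * (A * s ^ r'⁻¹) := by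
                refine mul_le_mul_of_nonneg_left (hgb s hs) ?_
                positivity
            _ = |α| * A * s ^ (α - 1 + r'⁻¹) := by
                rw [Real.rpow_add h0]
                ring
    refine ⟨(Ioc (0:ℝ) 1).indicator
        (fun s => ((α * s ^ (α - 1) : ℝ) : ℂ) * g s + ((s ^ α : ℝ) : ℂ) * g' s),
      (hmem_m'g.add hmem_mg').indicator measurableSet_Ioc, ?_⟩
    intro t ht
    by_cases ht0 : t = 0
    · simp [ht0]
    rw [if_neg ht0]
    have ht0' : (0:ℝ) < t := lt_of_le_of_ne ht.1 (Ne.symm ht0)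
    have hsub : Ioc (0:ℝ) t ⊆ Icc 0 1 := fun s hs => ⟨hs.1.le, hs.2.trans ht.2⟩
    have hsub' : Ioc (0:ℝ) t ⊆ Ioc 0 1 := fun s hs => ⟨hs.1, hs.2.trans ht.2⟩
    have hint_m'g : IntegrableOn (fun s => ((α * s ^ (α - 1) : ℝ) : ℂ) * g s) (Ioc 0 t) volume :=
      IntegrableOn.mono_set (by exact hmem_m'g.integrable hP1) hsub
    have hint_mg' : IntegrableOn (fun s => ((s ^ α : ℝ) : ℂ) * g' s) (Ioc 0 t) volume :=
      IntegrableOn.mono_set (by exact hmem_mg'.integrable hP1) hsub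
    have hint_g' : IntegrableOn g' (Ioc 0 t) volume :=
      IntegrableOn.mono_set (by exact hg'i) hsub
    have hDeq : (∫ s in Ioc (0:ℝ) t, ((Ioc (0:ℝ) 1).indicator
          (fun s => ((α * s ^ (α - 1) : ℝ) : ℂ) * g s + ((s ^ α : ℝ) : ℂ) * g' s)) s)
        = ∫ s in Ioc (0:ℝ) t, (((α * s ^ (α - 1) : ℝ) : ℂ) * g s + ((s ^ α : ℝ) : ℂ) * g' s) :=
      setIntegral_congr_fun measurableSet_Ioc fun s hs => indicator_of_mem (hsub' hs) _
    have hsplit : (∫ s in Ioc (0:ℝ) t,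
          (((α * s ^ (α - 1) : ℝ) : ℂ) * g s + ((s ^ α : ℝ) : ℂ) * g' s))
        = (∫ s in Ioc (0:ℝ) t, ((α * s ^ (α - 1) : ℝ) : ℂ) * g s)
          + ∫ s in Ioc (0:ℝ) t, ((s ^ α : ℝ) : ℂ) * g' s :=
      integral_add hint_m'g hint_mg'
    -- Fubini step
    have hfub : (∫ u in Ioc (0:ℝ) t, ((α * u ^ (α - 1) : ℝ) : ℂ) * g u)
        = ((t ^ α : ℝ) : ℂ) * g t - ∫ s in Ioc (0:ℝ) t, ((s ^ α : ℝ) : ℂ) * g' s := by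
      set μt : Measure ℝ := volume.restrict (Ioc (0:ℝ) t) with hμt
      set F : ℝ → ℝ → ℂ :=
        fun u s => (Iic u).indicator (fun s' => ((α * u ^ (α - 1) : ℝ) : ℂ) * g' s') s with hF
      have hFu : Function.uncurry F = ({q : ℝ × ℝ | q.2 ≤ q.1}).indicator
          (fun q => ((α * q.1 ^ (α - 1) : ℝ) : ℂ) * g' q.2) := by
        funext q
        rcases q with ⟨u, s⟩
        by_cases h : s ≤ u
        · simp only [Function.uncurry_apply_pair, hF]
          rw [indicator_of_mem (mem_Iic.2 h),
            indicator_of_mem (by exact h : (u, s) ∈ {q : ℝ × ℝ | q.2 ≤ q.1})]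
        · simp only [Function.uncurry_apply_pair, hF]
          rw [indicator_of_notMem (show s ∉ Iic u by simpa using h),
            indicator_of_notMem (show (u, s) ∉ {q : ℝ × ℝ | q.2 ≤ q.1} by simpa using h)]
      have hg't : Integrable g' μt := hint_g'
      have hFm : AEStronglyMeasurable (Function.uncurry F) (μt.prod μt) := by
        rw [hFu]
        refine AEStronglyMeasurable.indicator ?_
          (measurableSet_le measurable_snd measurable_fst)
        exact AEStronglyMeasurable.mul
          (((by fun_prop : Measurable fun u : ℝ => ((α * u ^ (α - 1) : ℝ) : ℂ)).comp
            measurable_fst).aestronglyMeasurable)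
          (hg't.aestronglyMeasurable.comp_quasiMeasurePreserving
            Measure.quasiMeasurePreserving_snd)
      have hW_int : IntegrableOn (fun u : ℝ => (|α| * A) * u ^ (α - 1 + r'⁻¹)) (Ioc 0 t)
          volume := IntegrableOn.mono_set ((integrableOn_rpow01 hWexp1).const_mul _) hsub
      have hFnorm : ∀ u ∈ Ioc (0:ℝ) t,
          (∫ s, ‖F u s‖ ∂μt) = |α| * u ^ (α - 1) * ∫ s in Ioc (0:ℝ) u, ‖g' s‖ := by
        intro u hu
        have h1 : ∀ s, ‖F u s‖ = (Iic u).indicator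
            (fun s' => ‖((α * u ^ (α - 1) : ℝ) : ℂ) * g' s'‖) s := by
          intro s
          simp only [hF]
          exact norm_indicator_eq_indicator_norm _ _
        rw [hμt]
        calc (∫ s in Ioc (0:ℝ) t, ‖F u s‖)
            = ∫ s in Ioc (0:ℝ) t, (Iic u).indicator
                (fun s' => ‖((α * u ^ (α - 1) : ℝ) : ℂ) * g' s'‖) s :=
              integral_congr_ae (Filter.Eventually.of_forall fun s => h1 s)
          _ = ∫ s in Ioc (0:ℝ) t ∩ Iic u, ‖((α * u ^ (α - 1) : ℝ) : ℂ) * g' s‖ :=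
              setIntegral_indicator measurableSet_Iic
          _ = ∫ s in Ioc (0:ℝ) u, ‖((α * u ^ (α - 1) : ℝ) : ℂ) * g' s‖ := by
              rw [Set.Ioc_inter_Iic, min_eq_right hu.2]
          _ = |α| * u ^ (α - 1) * ∫ s in Ioc (0:ℝ) u, ‖g' s‖ := by
              simp_rw [norm_mul]
              rw [integral_const_mul, Complex.norm_real, Real.norm_eq_abs, abs_mul,
                abs_of_nonneg (Real.rpow_nonneg hu.1.le _)]
      have hFint : Integrable (Function.uncurry F) (μt.prod μt) := by
        rw [integrable_prod_iff hFm]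
        simp only [Function.uncurry_apply_pair]
        constructor
        · refine (ae_restrict_iff' measurableSet_Ioc).2
            (Filter.Eventually.of_forall fun u _ => ?_)
          simp only [hF]
          exact (hg't.const_mul _).indicator measurableSet_Iic
        · refine Integrable.mono' hW_int (hFm.norm.integral_prod_right') ?_
          refine (ae_restrict_iff' measurableSet_Ioc).2
            (Filter.Eventually.of_forall fun u hu => ?_)
          have hnn : (0:ℝ) ≤ ∫ s, ‖F u s‖ ∂μt := integral_nonneg fun s => norm_nonneg _
          rw [Real.norm_of_nonneg hnn, hFnorm u hu]
          calc |α| * u ^ (α - 1) * ∫ s in Ioc (0:ℝ) u, ‖g' s‖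
              ≤ |α| * u ^ (α - 1) * (A * u ^ r'⁻¹) := by
                refine mul_le_mul_of_nonneg_left (key u (hsub hu)) ?_
                have := Real.rpow_nonneg hu.1.le (α - 1)
                positivity
            _ = |α| * A * u ^ (α - 1 + r'⁻¹) := by
                rw [Real.rpow_add hu.1]; ring
      have hswap := integral_integral_swap hFint
      have hL : (∫ u, (∫ s, F u s ∂μt) ∂μt)
          = ∫ u in Ioc (0:ℝ) t, ((α * u ^ (α - 1) : ℝ) : ℂ) * g u := by
        rw [hμt]
        refine setIntegral_congr_fun measurableSet_Ioc fun u hu => ?_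
        have h2 : (∫ s, F u s ∂μt)
            = ∫ s in Ioc (0:ℝ) u, ((α * u ^ (α - 1) : ℝ) : ℂ) * g' s := by
          simp only [hμt, hF]
          rw [setIntegral_indicator measurableSet_Iic, Set.Ioc_inter_Iic, min_eq_right hu.2]
        rw [h2, integral_const_mul, ← hgid u (hsub hu)]
      have hR : ∀ s ∈ Ioc (0:ℝ) t, (∫ u, F u s ∂μt)
          = (((t ^ α : ℝ) : ℂ) - ((s ^ α : ℝ) : ℂ)) * g' s := by
        intro s hs
        have h1 : (fun u => F u s) = fun u => (Ici s).indicator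
            (fun u => ((α * u ^ (α - 1) : ℝ) : ℂ) * g' s) u := by
          funext u
          by_cases h : s ≤ u
          · simp only [hF]
            rw [indicator_of_mem (mem_Iic.2 h), indicator_of_mem (mem_Ici.2 h)]
          · simp only [hF]
            rw [indicator_of_notMem (show s ∉ Iic u by simpa using h),
              indicator_of_notMem (show u ∉ Ici s by simpa using h)]
        have h2 : Ioc (0:ℝ) t ∩ Ici s = Icc s t := by
          ext u
          simp only [mem_inter_iff, mem_Ioc, mem_Ici, mem_Icc]
          constructor
          · rintro ⟨⟨_, h2⟩, h3⟩; exact ⟨h3, h2⟩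
          · rintro ⟨h3, h2⟩; exact ⟨⟨lt_of_lt_of_le hs.1 h3, h2⟩, h3⟩
        have h3 : (∫ u in Icc s t, ((α * u ^ (α - 1) : ℝ) : ℂ))
            = ((t ^ α - s ^ α : ℝ) : ℂ) := by
          rw [integral_Icc_eq_integral_Ioc, ← intervalIntegral.integral_of_le hs.2,
            intervalIntegral.integral_ofReal]
          have h0mem : (0:ℝ) ∉ Set.uIcc s t := by
            rw [Set.uIcc_of_le hs.2, mem_Icc]
            push_neg
            intro hc
            exact absurd hc (not_le.2 hs.1)
          have h4 : (∫ u in s..t, α * u ^ (α - 1)) = t ^ α - s ^ α := by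
            rw [intervalIntegral.integral_const_mul,
              integral_rpow (Or.inr ⟨by intro hc; nlinarith [hαneg], h0mem⟩)]
            have h5 : α - 1 + 1 = α := by ring
            rw [h5]
            field_simp
          rw [h4]
        rw [h1, hμt, setIntegral_indicator measurableSet_Ici, h2, integral_mul_const, h3,
          Complex.ofReal_sub]
      have hR' : (∫ s, (∫ u, F u s ∂μt) ∂μt)
          = ((t ^ α : ℝ) : ℂ) * g t - ∫ s in Ioc (0:ℝ) t, ((s ^ α : ℝ) : ℂ) * g' s := by
        rw [hμt]
        rw [setIntegral_congr_fun measurableSet_Ioc fun s hs => hR s hs]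
        have h6 : ∀ s : ℝ, ((((t ^ α : ℝ) : ℂ) - ((s ^ α : ℝ) : ℂ)) * g' s)
            = ((t ^ α : ℝ) : ℂ) * g' s - ((s ^ α : ℝ) : ℂ) * g' s := fun s => by ring
        simp_rw [h6]
        rw [integral_sub (hint_g'.const_mul _) hint_mg', integral_const_mul,
          ← hgid t ht]
      rw [← hL, hswap, hR']
    calc ((t ^ α : ℝ) : ℂ) * g t
        = ((((t ^ α : ℝ) : ℂ) * g t - ∫ s in Ioc (0:ℝ) t, ((s ^ α : ℝ) : ℂ) * g' s)
            + ∫ s in Ioc (0:ℝ) t, ((s ^ α : ℝ) : ℂ) * g' s) := by ring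
      _ = ∫ s in Ioc (0:ℝ) t, ((Ioc (0:ℝ) 1).indicator
            (fun s => ((α * s ^ (α - 1) : ℝ) : ℂ) * g s + ((s ^ α : ℝ) : ℂ) * g' s)) s := by
          rw [hDeq, hsplit, hfub]
end

section
/- Let r > p > 1, define v by 1/v = 1/p − 1/r, and let m(t) = t^{−1/v} for t ∈ (0,1], so that m'(t) = −(1/v) t^{−1/v−1}. Then m ∉ L^v(0,1] and Σ_{n=1}^∞ (2^{−n/r'} ‖m'·χ_{(2^{−n},2^{−n+1}]}‖_p)^p = ∞, yet there is a constant C such that (∫_ε^1 |m'(t)|^p dt)^{1/p} ≤ C·ε^{−1/r'} for all ε ∈ (0,1]. Thus m satisfies the necessary growth condition of the multiplier theorem for AC_r → AC_p but fails the sufficient summability condition. -/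
open MeasureTheory Set
open scoped ENNReal NNReal

lemma lint_rpow_Ioc (s a b : ℝ) (ha : 0 < a) (hab : a ≤ b) (hs : s ≠ -1) :
    ∫⁻ t in Ioc a b, ENNReal.ofReal (t ^ s) ∂(volume : Measure ℝ)
      = ENNReal.ofReal ((b ^ (s + 1) - a ^ (s + 1)) / (s + 1)) := by
  have h0 : (0 : ℝ) ∉ Set.uIcc a b := by
    rw [Set.mem_uIcc]; push_neg
    exact ⟨fun h => absurd h (not_le.mpr ha), fun h => absurd h (not_le.mpr (lt_of_lt_of_le ha hab))⟩
  have hint : IntegrableOn (fun t : ℝ => t ^ s) (Ioc a b) volume := by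
    rw [← intervalIntegrable_iff_integrableOn_Ioc_of_le hab]
    exact intervalIntegral.intervalIntegrable_rpow (Or.inr h0)
  have hnn : 0 ≤ᵐ[volume.restrict (Ioc a b)] fun t : ℝ => t ^ s := by
    filter_upwards [ae_restrict_mem measurableSet_Ioc] with t ht
    exact Real.rpow_nonneg (le_of_lt (lt_trans ha ht.1)) s
  rw [← MeasureTheory.ofReal_integral_eq_lintegral_ofReal hint hnn]
  congr 1
  rw [← intervalIntegral.integral_of_le hab]
  exact integral_rpow (Or.inr ⟨hs, h0⟩)

lemma norm_lint (c s p a b : ℝ) (hc : 0 ≤ c) (hp : 0 < p) (ha : 0 < a) (hab : a ≤ b)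
    (hs : s * p ≠ -1) :
    ∫⁻ t in Ioc a b, (‖((-c * t ^ s : ℝ) : ℂ)‖₊ : ℝ≥0∞) ^ p ∂(volume : Measure ℝ)
      = ENNReal.ofReal (c ^ p * ((b ^ (s * p + 1) - a ^ (s * p + 1)) / (s * p + 1))) := by
  have step1 : ∀ᵐ t ∂(volume : Measure ℝ), t ∈ Ioc a b →
      (‖((-c * t ^ s : ℝ) : ℂ)‖₊ : ℝ≥0∞) ^ p
        = ENNReal.ofReal (c ^ p) * ENNReal.ofReal (t ^ (s * p)) := by
    refine ae_of_all _ fun t ht => ?_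
    have ht0 : 0 < t := lt_trans ha ht.1
    have h1 : ‖((-c * t ^ s : ℝ) : ℂ)‖ = c * t ^ s := by
      rw [Complex.norm_real, Real.norm_eq_abs, abs_of_nonpos (by
        exact mul_nonpos_of_nonpos_of_nonneg (neg_nonpos.mpr hc) (Real.rpow_nonneg ht0.le s))]
      ring
    rw [← enorm_eq_nnnorm, ← ofReal_norm, h1,
      ENNReal.ofReal_rpow_of_nonneg (mul_nonneg hc (Real.rpow_nonneg ht0.le s)) hp.le,
      Real.mul_rpow hc (Real.rpow_nonneg ht0.le s),
      ← Real.rpow_mul ht0.le, ENNReal.ofReal_mul (Real.rpow_nonneg hc p)]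
  rw [setLIntegral_congr_fun_ae measurableSet_Ioc step1, lintegral_const_mul' _ _ ENNReal.ofReal_ne_top,
    lint_rpow_Ioc (s * p) a b ha hab hs, ← ENNReal.ofReal_mul (Real.rpow_nonneg hc p)]

/-- Example 2, first part.  Let `r > p > 1` (real exponents),
`1/v = 1/p − 1/r`, `r'` the conjugate exponent of `r`, and `m t = t^{−1/v}`,
so `m' t = −(1/v) t^{−1/v−1}`.  Then `m ∉ L^v(0,1]` and
`Σ_{n≥1} (2^{−n/r'} ‖m'·χ_{(2^{−n},2^{−n+1}]}‖_p)^p = ∞` (blocks indexed by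
`n : ℕ` ↔ paper's `n + 1`), yet `‖m'·χ_{[ε,1]}‖_p ≤ C ε^{−1/r'}` for some
constant `C`: `m` satisfies the necessary growth condition of Theorem 5 but not
the sufficient summability condition of Theorem 6. -/
theorem example_necessary_not_sufficient
    (p r v r' : ℝ) (hp : 1 < p) (hpr : p < r)
    (hv : v⁻¹ = p⁻¹ - r⁻¹) (hr' : r⁻¹ + r'⁻¹ = 1) :
    ¬ MemLp (fun t : ℝ => ((t ^ (-v⁻¹) : ℝ) : ℂ)) (ENNReal.ofReal v) mu01 ∧
    (∑' n : ℕ,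
      (ENNReal.ofReal ((2 : ℝ) ^ (-((n : ℝ) + 1) / r')) *
        eLpNorm ((Set.Ioc ((2 : ℝ) ^ (-((n : ℝ) + 1))) ((2 : ℝ) ^ (-(n : ℝ)))).indicator
            (fun t : ℝ => ((-v⁻¹ * t ^ (-v⁻¹ - 1) : ℝ) : ℂ)))
          (ENNReal.ofReal p) mu01) ^ p = ⊤) ∧
    (∃ C : ℝ, ∀ ε ∈ Set.Ioc (0 : ℝ) 1,
      eLpNorm ((Set.Icc ε 1).indicator
          (fun t : ℝ => ((-v⁻¹ * t ^ (-v⁻¹ - 1) : ℝ) : ℂ)))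
        (ENNReal.ofReal p) mu01 ≤ ENNReal.ofReal (C * ε ^ (-r'⁻¹))) := by
  have hp0 : (0:ℝ) < p := lt_trans one_pos hp
  have hr1 : 1 < r := hp.trans hpr
  have hr0 : (0:ℝ) < r := lt_trans one_pos hr1
  have hri : r⁻¹ < p⁻¹ := by
    rw [inv_lt_inv₀ hr0 hp0]; exact hpr
  have hvinv : 0 < v⁻¹ := by rw [hv]; linarith
  have hv0 : 0 < v := inv_pos.mp hvinv
  have hrinv1 : r⁻¹ < 1 := by
    rw [inv_lt_one_iff₀]; right; exact hr1
  have hr'inv : 0 < r'⁻¹ := by linarith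
  have hr'0 : 0 < r' := inv_pos.mp hr'inv
  obtain ⟨q, hqdef⟩ : ∃ q, q = p * r'⁻¹ := ⟨_, rfl⟩
  have hq : 0 < q := hqdef ▸ mul_pos hp0 hr'inv
  have key : (-v⁻¹ - 1) * p + 1 = -q := by
    rw [hv, hqdef]
    have h1 : r'⁻¹ = 1 - r⁻¹ := by linarith
    rw [h1]
    field_simp
    ring
  have hqne : (-v⁻¹ - 1) * p ≠ -1 := by
    intro h
    have : (-v⁻¹ - 1) * p + 1 = 0 := by rw [h]; ring
    rw [key] at this
    linarith
  have hmu : mu01 = volume.restrict (Icc (0:ℝ) 1) := rfl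
  refine ⟨?_, ?_, ?_⟩
  · -- Part 1
    intro h
    have hne : (ENNReal.ofReal v) ≠ 0 := (ENNReal.ofReal_pos.mpr hv0).ne'
    have hint := h.integrable_norm_rpow hne ENNReal.ofReal_ne_top
    rw [ENNReal.toReal_ofReal hv0.le, hmu] at hint
    have hIoo : IntegrableOn (fun t : ℝ => ‖((t ^ (-v⁻¹) : ℝ) : ℂ)‖ ^ v) (Ioo 0 1) volume :=
      (show IntegrableOn _ (Icc (0:ℝ) 1) volume from hint).mono_set Ioo_subset_Icc_self
    have heq : EqOn (fun t : ℝ => ‖((t ^ (-v⁻¹) : ℝ) : ℂ)‖ ^ v)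
        (fun t : ℝ => t ^ (-1 : ℝ)) (Ioo 0 1) := by
      intro t ht
      simp only
      rw [Complex.norm_real, Real.norm_eq_abs, abs_of_nonneg (Real.rpow_nonneg ht.1.le _),
        ← Real.rpow_mul ht.1.le]
      congr 1
      rw [neg_mul, inv_mul_cancel₀ hv0.ne']
    have hbad : IntegrableOn (fun t : ℝ => t ^ (-1 : ℝ)) (Ioo 0 1) volume :=
      (hIoo.congr_fun heq measurableSet_Ioo)
    have := (intervalIntegral.integrableOn_Ioo_rpow_iff one_pos).mp hbad
    linarith
  · -- Part 2
    have h2q : (1:ℝ) < (2:ℝ) ^ q :=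
      (Real.one_lt_rpow_iff_of_pos two_pos).mpr (Or.inl ⟨one_lt_two, hq⟩)
    have hterm : ∀ n : ℕ,
        (ENNReal.ofReal ((2 : ℝ) ^ (-((n : ℝ) + 1) / r')) *
          eLpNorm ((Set.Ioc ((2 : ℝ) ^ (-((n : ℝ) + 1))) ((2 : ℝ) ^ (-(n : ℝ)))).indicator
              (fun t : ℝ => ((-v⁻¹ * t ^ (-v⁻¹ - 1) : ℝ) : ℂ)))
            (ENNReal.ofReal p) mu01) ^ p
        = ENNReal.ofReal (v⁻¹ ^ p * (((2:ℝ) ^ q - 1) / q) * (2:ℝ) ^ (-q)) := by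
      intro n
      have hn0 : (0:ℝ) ≤ (n:ℝ) := Nat.cast_nonneg n
      have ha : 0 < (2:ℝ) ^ (-((n:ℝ)+1)) := Real.rpow_pos_of_pos two_pos _
      have hab : (2:ℝ) ^ (-((n:ℝ)+1)) ≤ (2:ℝ) ^ (-(n:ℝ)) :=
        Real.rpow_le_rpow_of_exponent_le one_le_two (by linarith)
      have hb1 : (2:ℝ) ^ (-(n:ℝ)) ≤ 1 :=
        Real.rpow_le_one_of_one_le_of_nonpos one_le_two (by linarith)
      have hsub : Ioc ((2:ℝ) ^ (-((n:ℝ)+1))) ((2:ℝ) ^ (-(n:ℝ))) ⊆ Icc (0:ℝ) 1 :=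
        fun t ht => ⟨(ha.trans ht.1).le, ht.2.trans hb1⟩
      rw [eLpNorm_indicator_eq_eLpNorm_restrict measurableSet_Ioc, hmu,
        Measure.restrict_restrict measurableSet_Ioc, inter_eq_left.mpr hsub,
        eLpNorm_eq_lintegral_rpow_enorm_toReal (ENNReal.ofReal_pos.mpr hp0).ne' ENNReal.ofReal_ne_top,
        ENNReal.toReal_ofReal hp0.le,
        (show ∫⁻ t in Ioc _ _, ‖((-v⁻¹ * t ^ (-v⁻¹ - 1) : ℝ) : ℂ)‖ₑ ^ p = _ from
          norm_lint v⁻¹ (-v⁻¹-1) p _ _ hvinv.le hp0 ha hab hqne), key,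
        ENNReal.mul_rpow_of_nonneg _ _ hp0.le, ← ENNReal.rpow_mul,
        one_div_mul_cancel hp0.ne', ENNReal.rpow_one,
        ENNReal.ofReal_rpow_of_pos (Real.rpow_pos_of_pos two_pos _),
        ← ENNReal.ofReal_mul (by positivity)]
      congr 1
      have hbq : ((2:ℝ) ^ (-(n:ℝ))) ^ (-q) = (2:ℝ) ^ ((n:ℝ)*q) := by
        rw [← Real.rpow_mul (by norm_num)]; congr 1; ring
      have haq : ((2:ℝ) ^ (-((n:ℝ)+1))) ^ (-q) = (2:ℝ) ^ ((n:ℝ)*q) * (2:ℝ)^q := by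
        rw [← Real.rpow_mul (by norm_num), ← Real.rpow_add two_pos]; congr 1; ring
      have hw : (2:ℝ) ^ (-((n:ℝ)+1)/r'*p) * (2:ℝ)^((n:ℝ)*q) = (2:ℝ)^(-q) := by
        rw [← Real.rpow_add two_pos]; congr 1
        rw [hqdef]; field_simp; ring
      have hwp : ((2:ℝ) ^ (-((n:ℝ)+1)/r')) ^ p = (2:ℝ) ^ (-((n:ℝ)+1)/r'*p) := by
        rw [← Real.rpow_mul (by norm_num)]
      rw [hwp, hbq, haq, ← hw]
      generalize (2:ℝ) ^ (-((n:ℝ)+1)/r'*p) = A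
      generalize (2:ℝ) ^ ((n:ℝ)*q) = X
      generalize (2:ℝ) ^ q = Y
      field_simp [hq.ne']
      ring
    rw [tsum_congr hterm]
    refine ENNReal.tsum_const_eq_top_of_ne_zero (ne_of_gt (ENNReal.ofReal_pos.mpr ?_))
    exact mul_pos (mul_pos (Real.rpow_pos_of_pos hvinv p)
      (div_pos (by linarith) hq)) (Real.rpow_pos_of_pos two_pos _)
  · -- Part 3
    refine ⟨(v⁻¹ ^ p / q) ^ (1/p), fun ε hε => ?_⟩
    have hε0 : 0 < ε := hε.1
    have hε1 : ε ≤ 1 := hε.2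
    have hsub : Icc ε 1 ⊆ Icc (0:ℝ) 1 := fun t ht => ⟨hε0.le.trans ht.1, ht.2⟩
    rw [eLpNorm_indicator_eq_eLpNorm_restrict measurableSet_Icc, hmu,
      Measure.restrict_restrict measurableSet_Icc, inter_eq_left.mpr hsub,
      eLpNorm_eq_lintegral_rpow_enorm_toReal (ENNReal.ofReal_pos.mpr hp0).ne' ENNReal.ofReal_ne_top,
      ENNReal.toReal_ofReal hp0.le, ← restrict_Ioc_eq_restrict_Icc,
      (show ∫⁻ t in Ioc _ _, ‖((-v⁻¹ * t ^ (-v⁻¹ - 1) : ℝ) : ℂ)‖ₑ ^ p = _ from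
        norm_lint v⁻¹ (-v⁻¹-1) p ε 1 hvinv.le hp0 hε0 hε1 hqne), key]
    have hεq : 0 < ε ^ (-q) := Real.rpow_pos_of_pos hε0 _
    have hVp : (0:ℝ) ≤ v⁻¹ ^ p := Real.rpow_nonneg hvinv.le p
    have hle : v⁻¹ ^ p * (((1:ℝ) ^ (-q) - ε ^ (-q)) / (-q))
        ≤ v⁻¹ ^ p * (ε ^ (-q) / q) := by
      rw [Real.one_rpow, div_neg, ← neg_div, neg_sub]
      apply mul_le_mul_of_nonneg_left _ hVp
      rw [div_le_div_iff_of_pos_right hq]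
      linarith
    refine le_trans (ENNReal.rpow_le_rpow (ENNReal.ofReal_le_ofReal hle) (by positivity))
      (le_of_eq ?_)
    rw [ENNReal.ofReal_rpow_of_nonneg (by positivity) (by positivity)]
    congr 1
    rw [show v⁻¹ ^ p * (ε ^ (-q) / q) = v⁻¹ ^ p / q * ε ^ (-q) from by ring,
      Real.mul_rpow (div_nonneg hVp hq.le) hεq.le, ← Real.rpow_mul hε0.le]
    congr 1
    rw [hqdef]
    rw [show -(p * r'⁻¹) * (1/p) = -r'⁻¹ from by field_simp]
end
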